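/- arXiv:2408.06817 — 3 statements merged into one kernel-verified Lean document; each statement's English description precedes it below -/
import Mathlib

section
/- Let p ≥ 2 be an integer and γ_0, …, γ_{p−1} > 0 real numbers with A := ∑_{j=0}^{p−1} γ_j. Then there exists a unique continuous strictly increasing function φ : [0,1] → ℝ with φ(0) = 0 and φ(1) = 1 such that for each j = 0, 1, …, p−1 and every t with j/p ≤ t ≤ (j+1)/p, φ(t) = (γ_{p−j−1}/A)·φ(pt − j) + (∑_{p−j≤i<p} γ_i)/A. Moreover, this φ satisfies the explicit formula φ(∑_{j≥1} b_j p^{−j}) = ∑_{j≥1} A^{−j} · (∑_{p−b_j≤i<p} γ_i) · ∏_{1≤i<j} γ_{p−1−b_i} for any sequence of digits b_j ∈ {0, 1, …, p−1}. -/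
open Finset Filter Topology

set_option linter.unusedSectionVars false

namespace PAryAux

variable (p : ℕ) (γ : ℕ → ℝ)

noncomputable def A : ℝ := ∑ i ∈ Finset.range p, γ i

noncomputable def cc (j : ℕ) : ℝ := (∑ i ∈ Finset.Ico (p - j) p, γ i) / A p γ

noncomputable def idx (t : ℝ) : ℕ := (⌊t * p⌋).toNat ⊓ (p - 1)

noncomputable def T (f : ℝ → ℝ) (t : ℝ) : ℝ :=
  γ (p - 1 - idx p t) / A p γ * f (p * t - idx p t) + cc p γ (idx p t)

noncomputable def F (n : ℕ) : ℝ → ℝ := (T p γ)^[n] id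

noncomputable def phi (t : ℝ) : ℝ :=
  if t ∈ Set.Icc (0:ℝ) 1 then limUnder atTop (fun n => F p γ n t) else 0

noncomputable def mγ' (γ : ℕ → ℝ) : ℝ := min (γ 0) (γ 1)

noncomputable def r : ℝ := (A p γ - mγ' γ) / A p γ

section Basic

variable {p : ℕ} {γ : ℕ → ℝ} (hp : 2 ≤ p) (hγ : ∀ j < p, 0 < γ j)

include hp hγ

lemma hA : 0 < A p γ :=
  Finset.sum_pos (fun i hi => hγ i (Finset.mem_range.mp hi)) ⟨0, Finset.mem_range.mpr (by omega)⟩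

lemma hm : 0 < mγ' γ :=
  lt_min (hγ 0 (by omega)) (hγ 1 (by omega))

lemma pair_le {i j : ℕ} (hi : i < p) (hj : j < p) (hij : i ≠ j) : γ i + γ j ≤ A p γ := by
  rw [A, ← Finset.sum_pair hij]
  exact Finset.sum_le_sum_of_subset_of_nonneg
    (by intro x hx; simp at hx ⊢; rcases hx with h | h <;> omega)
    (fun x hx _ => (hγ x (Finset.mem_range.mp hx)).le)

lemma hgr {i : ℕ} (hi : i < p) : γ i / A p γ ≤ r p γ := by
  have hA := hA hp hγ
  have hm := hm hp hγ
  have h1 : γ i + mγ' γ ≤ A p γ := by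
    rcases eq_or_ne i 0 with rfl | h0
    · have := pair_le hp hγ (by omega : (0:ℕ) < p) (by omega : 1 < p) (by omega)
      have : mγ' γ ≤ γ 1 := min_le_right _ _
      nlinarith [pair_le hp hγ (show (0:ℕ) < p by omega) (show 1 < p by omega) (by omega : (0:ℕ) ≠ 1)]
    · have h2 := pair_le hp hγ (by omega : (0:ℕ) < p) hi (Ne.symm h0)
      have : mγ' γ ≤ γ 0 := min_le_left _ _
      linarith
  rw [r]
  gcongr
  linarith

lemma hr0 : 0 < r p γ := by
  have hA := hA hp hγ
  have hm := hm hp hγ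
  have h1 : mγ' γ + mγ' γ ≤ A p γ := by
    have := pair_le hp hγ (by omega : (0:ℕ) < p) (by omega : 1 < p) (by omega)
    have h2 : mγ' γ ≤ γ 0 := min_le_left _ _
    have h3 : mγ' γ ≤ γ 1 := min_le_right _ _
    linarith
  rw [r]
  apply div_pos (by linarith) hA
  
lemma hr1 : r p γ < 1 := by
  have hA := hA hp hγ
  have hm := hm hp hγ
  rw [r, div_lt_one hA]
  linarith


lemma csucc {j : ℕ} (hj : j < p) :
    cc p γ (j + 1) = γ (p - 1 - j) / A p γ + cc p γ j := by
  rw [cc, cc, ← add_div]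
  congr 1
  rw [show p - (j+1) = p - 1 - j by omega,
    Finset.sum_eq_sum_Ico_succ_bot (show p - 1 - j < p by omega),
    show p - 1 - j + 1 = p - j by omega]

lemma ccmono {j k : ℕ} (hjk : j ≤ k) : cc p γ j ≤ cc p γ k := by
  have hA := hA hp hγ
  rw [cc, cc]
  apply div_le_div_of_nonneg_right ?_ hA.le
  apply Finset.sum_le_sum_of_subset_of_nonneg (Finset.Ico_subset_Ico (by omega) le_rfl)
  intro x hx _
  exact (hγ x (by simp [Finset.mem_Ico] at hx; omega)).le

lemma cc0 : cc p γ 0 = 0 := by simp [cc]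

lemma ccp : cc p γ p = 1 := by
  rw [cc, show p - p = 0 by omega, ← Finset.range_eq_Ico, ← A,
    div_self (hA hp hγ).ne']

lemma ccnonneg (j : ℕ) : 0 ≤ cc p γ j := by
  have := ccmono hp hγ (Nat.zero_le j); rwa [cc0 hp hγ] at this

lemma ccle1 {j : ℕ} (hj : j ≤ p) : cc p γ j ≤ 1 := by
  have := ccmono hp hγ hj; rwa [ccp hp hγ] at this

lemma idx_lt (t : ℝ) : idx p t < p := by
  have : idx p t ≤ p - 1 := min_le_right _ _
  omega

lemma idx_le {t : ℝ} (ht : 0 ≤ t) : (idx p t : ℝ) ≤ t * p := by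
  have h0 : (0:ℤ) ≤ ⌊t * p⌋ := Int.floor_nonneg.mpr (by positivity)
  have h1 : (idx p t : ℕ) ≤ (⌊t * p⌋).toNat := min_le_left _ _
  calc (idx p t : ℝ) ≤ ((⌊t*p⌋).toNat : ℝ) := by exact_mod_cast h1
    _ = ((⌊t*p⌋ : ℤ) : ℝ) := by exact_mod_cast congrArg (fun z : ℤ => (z:ℝ)) (Int.toNat_of_nonneg h0)
    _ ≤ t * p := Int.floor_le _

lemma idx_ge {t : ℝ} (ht : t ≤ 1) : t * p ≤ (idx p t : ℝ) + 1 := by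
  have hp0 : (0:ℝ) < p := by positivity
  by_cases hc : (⌊t * p⌋).toNat ≤ p - 1
  · have hidx : idx p t = (⌊t*p⌋).toNat := min_eq_left hc
    have h2 : ((⌊t*p⌋:ℤ):ℝ) ≤ (((⌊t*p⌋).toNat : ℤ):ℝ) := by
      exact_mod_cast Int.self_le_toNat _
    have h3 : t * p < (⌊t*p⌋ : ℝ) + 1 := Int.lt_floor_add_one _
    rw [hidx]
    push_cast at h2 ⊢
    linarith
  · have hidx : idx p t = p - 1 := min_eq_right (by omega)
    have h4 : t * p ≤ p := by nlinarith
    rw [hidx]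
    have h5 : ((p - 1 : ℕ) : ℝ) = (p:ℝ) - 1 := by
      push_cast [Nat.cast_sub (show 1 ≤ p by omega)]; ring
    rw [h5]; linarith

lemma u_mem {t : ℝ} (ht : t ∈ Set.Icc (0:ℝ) 1) :
    p * t - idx p t ∈ Set.Icc (0:ℝ) 1 := by
  obtain ⟨h0, h1⟩ := ht
  have ha := idx_le hp hγ (p := p) h0
  have hb := idx_ge hp hγ (p := p) h1
  have hc : t * p = p * t := mul_comm _ _
  constructor <;> [linarith; linarith]

lemma idx_mono {s t : ℝ} (hst : s ≤ t) : idx p s ≤ idx p t := by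
  have h1 : ⌊s * p⌋ ≤ ⌊t * p⌋ :=
    Int.floor_le_floor (mul_le_mul_of_nonneg_right hst (by positivity))
  exact min_le_min (Int.toNat_le_toNat h1) le_rfl

lemma idx_zero : idx p (0:ℝ) = 0 := by
  rw [idx]
  norm_num

lemma idx_one : idx p (1:ℝ) = p - 1 := by
  rw [idx]
  have : (1:ℝ) * p = ((p:ℤ):ℝ) := by push_cast; ring
  rw [this, Int.floor_intCast]
  simp

def Good (f : ℝ → ℝ) : Prop :=
  MonotoneOn f (Set.Icc 0 1) ∧ Set.MapsTo f (Set.Icc 0 1) (Set.Icc 0 1) ∧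
    f 0 = 0 ∧ f 1 = 1

lemma good_T {f : ℝ → ℝ} (hf : Good f) : Good (T p γ f) := by
  obtain ⟨hmono, hmaps, hf0, hf1⟩ := hf
  have hA := hA hp hγ
  have hT0 : T p γ f 0 = 0 := by
    rw [T, idx_zero hp hγ]
    simp [hf0, cc0 hp hγ]
  have hT1 : T p γ f 1 = 1 := by
    rw [T, idx_one hp hγ]
    have h5 : ((p - 1 : ℕ) : ℝ) = (p:ℝ) - 1 := by
      push_cast [Nat.cast_sub (show 1 ≤ p by omega)]; ring
    rw [h5, show (p:ℝ) * 1 - ((p:ℝ) - 1) = 1 by ring, hf1,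
      show p - 1 - (p - 1) = 0 by omega, mul_one]
    have := csucc hp hγ (show p - 1 < p by omega)
    rw [show p - 1 + 1 = p by omega, show p - 1 - (p-1) = 0 by omega] at this
    rw [← this, ccp hp hγ]
  have hmapsT : Set.MapsTo (T p γ f) (Set.Icc 0 1) (Set.Icc 0 1) := by
    intro t ht
    have hu := u_mem hp hγ ht
    have hfu := hmaps hu
    have hγpos := hγ _ (show p - 1 - idx p t < p by have := idx_lt hp hγ (γ := γ) t; omega)
    constructor
    · rw [T]
      have := ccnonneg hp hγ (idx p t)
      have : 0 ≤ γ (p - 1 - idx p t) / A p γ * f (p * t - idx p t) := by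
        apply mul_nonneg (by positivity) hfu.1
      linarith [ccnonneg hp hγ (idx p t)]
    · rw [T]
      have h1 : γ (p - 1 - idx p t) / A p γ * f (p * t - idx p t) ≤
          γ (p - 1 - idx p t) / A p γ * 1 := by
        apply mul_le_mul_of_nonneg_left hfu.2 (by positivity)
      have h2 := csucc hp hγ (idx_lt hp hγ (γ := γ) t)
      have h3 : cc p γ (idx p t + 1) ≤ 1 :=
        ccle1 hp hγ (by have := idx_lt hp hγ (γ := γ) t; omega)
      rw [mul_one] at h1
      linarith
  refine ⟨?_, hmapsT, hT0, hT1⟩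
  intro s hs t ht hst
  have his := idx_lt hp hγ (γ := γ) s
  have hit := idx_lt hp hγ (γ := γ) t
  have hus := u_mem hp hγ hs
  have hut := u_mem hp hγ ht
  rcases eq_or_lt_of_le (idx_mono hp hγ (p := p) hst) with heq | hlt
  · rw [T, T, ← heq]
    have hγpos := hγ _ (show p - 1 - idx p s < p by omega)
    have : f (p * s - idx p s) ≤ f (p * t - idx p s) := by
      apply hmono hus (by rw [heq] at hus ⊢; exact hut)
      have : (0:ℝ) ≤ p := by positivity
      nlinarith
    have := mul_le_mul_of_nonneg_left this (show (0:ℝ) ≤ γ (p - 1 - idx p s) / A p γ by positivity)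
    linarith
  · have h1 : T p γ f s ≤ cc p γ (idx p s + 1) := by
      rw [T]
      have h2 := csucc hp hγ his
      have := mul_le_mul_of_nonneg_left ((hmaps hus).2)
        (show (0:ℝ) ≤ γ (p - 1 - idx p s) / A p γ by
          have := hγ _ (show p - 1 - idx p s < p by omega); positivity)
      rw [mul_one] at this
      linarith
    have h2 : cc p γ (idx p t) ≤ T p γ f t := by
      rw [T]
      have := mul_nonneg
        (show (0:ℝ) ≤ γ (p - 1 - idx p t) / A p γ by
          have := hγ _ (show p - 1 - idx p t < p by omega); positivity)
        ((hmaps hut).1)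
      linarith
    have h3 : cc p γ (idx p s + 1) ≤ cc p γ (idx p t) := ccmono hp hγ (by omega)
    linarith

lemma good_F (n : ℕ) : Good (F p γ n) := by
  induction n with
  | zero =>
    refine ⟨fun a _ b _ hab => hab, fun x hx => hx, rfl, rfl⟩
  | succ n ih =>
    rw [F, Function.iterate_succ_apply']
    exact good_T hp hγ ih

lemma contract {f g : ℝ → ℝ} {d : ℝ} (hfg : ∀ u ∈ Set.Icc (0:ℝ) 1, |f u - g u| ≤ d)
    {t : ℝ} (ht : t ∈ Set.Icc (0:ℝ) 1) : |T p γ f t - T p γ g t| ≤ r p γ * d := by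
  have hu := u_mem hp hγ ht
  have hA := hA hp hγ
  have hγpos := hγ _ (show p - 1 - idx p t < p by have := idx_lt hp hγ (γ := γ) t; omega)
  have heq : T p γ f t - T p γ g t =
      γ (p - 1 - idx p t) / A p γ * (f (p * t - idx p t) - g (p * t - idx p t)) := by
    rw [T, T]; ring
  rw [heq, abs_mul, abs_of_nonneg (show (0:ℝ) ≤ γ (p - 1 - idx p t) / A p γ by positivity)]
  exact mul_le_mul (hgr hp hγ (show p - 1 - idx p t < p by have := idx_lt hp hγ (γ := γ) t; omega))
    (hfg _ hu) (abs_nonneg _) (hr0 hp hγ).le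

lemma Fdiff : ∀ n, ∀ t ∈ Set.Icc (0:ℝ) 1, |F p γ (n+1) t - F p γ n t| ≤ r p γ ^ n := by
  intro n
  induction n with
  | zero =>
    intro t ht
    have h1 := (good_F hp hγ (γ := γ) 1).2.1 ht
    have h0 : F p γ 0 t = t := rfl
    rw [pow_zero, abs_sub_le_iff]
    constructor <;> [skip; skip] <;>
      · obtain ⟨ha, hb⟩ := h1
        obtain ⟨hc, hd⟩ := ht
        rw [h0]
        linarith
  | succ n ih =>
    intro t ht
    have e1 : F p γ (n+2) t = T p γ (F p γ (n+1)) t := by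
      rw [F, Function.iterate_succ_apply']; rfl
    have e2 : F p γ (n+1) t = T p γ (F p γ n) t := by
      rw [F, Function.iterate_succ_apply']; rfl
    rw [e1, e2, pow_succ']
    exact contract hp hγ ih ht

lemma cauchyF {t : ℝ} (ht : t ∈ Set.Icc (0:ℝ) 1) : CauchySeq (fun n => F p γ n t) := by
  apply cauchySeq_of_le_geometric (r p γ) 1 (hr1 hp hγ)
  intro n
  rw [dist_comm, Real.dist_eq, one_mul]
  exact Fdiff hp hγ n t ht

lemma hlim {t : ℝ} (ht : t ∈ Set.Icc (0:ℝ) 1) :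
    Tendsto (fun n => F p γ n t) atTop (𝓝 (phi p γ t)) := by
  rw [phi, if_pos ht]
  exact (cauchyF hp hγ ht).tendsto_limUnder

lemma phi0 : phi p γ 0 = 0 := by
  have h := hlim hp hγ (show (0:ℝ) ∈ Set.Icc (0:ℝ) 1 by norm_num)
  have : ∀ n, F p γ n (0:ℝ) = 0 := fun n => (good_F hp hγ n).2.2.1
  simp only [this] at h
  exact tendsto_nhds_unique h tendsto_const_nhds

lemma phi1 : phi p γ 1 = 1 := by
  have h := hlim hp hγ (show (1:ℝ) ∈ Set.Icc (0:ℝ) 1 by norm_num)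
  have : ∀ n, F p γ n (1:ℝ) = 1 := fun n => (good_F hp hγ n).2.2.2
  simp only [this] at h
  exact tendsto_nhds_unique h tendsto_const_nhds

lemma phimem {t : ℝ} (ht : t ∈ Set.Icc (0:ℝ) 1) : phi p γ t ∈ Set.Icc (0:ℝ) 1 := by
  have h := hlim hp hγ ht
  constructor
  · exact ge_of_tendsto h (Eventually.of_forall fun n => ((good_F hp hγ n).2.1 ht).1)
  · exact le_of_tendsto h (Eventually.of_forall fun n => ((good_F hp hγ n).2.1 ht).2)

lemma phimono : MonotoneOn (phi p γ) (Set.Icc 0 1) := by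
  intro s hs t ht hst
  exact le_of_tendsto_of_tendsto' (hlim hp hγ hs) (hlim hp hγ ht)
    (fun n => (good_F hp hγ n).1 hs ht hst)

lemma phifix {t : ℝ} (ht : t ∈ Set.Icc (0:ℝ) 1) :
    phi p γ t = γ (p - 1 - idx p t) / A p γ * phi p γ (p * t - idx p t)
      + cc p γ (idx p t) := by
  have hu := u_mem hp hγ ht
  have h1 : Tendsto (fun n => F p γ (n+1) t) atTop (𝓝 (phi p γ t)) :=
    (hlim hp hγ ht).comp (tendsto_add_atTop_nat 1)
  have h2 : ∀ n, F p γ (n+1) t =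
      γ (p - 1 - idx p t) / A p γ * F p γ n (p * t - idx p t) + cc p γ (idx p t) := by
    intro n
    rw [F, Function.iterate_succ_apply']
    rfl

  have h3 : Tendsto (fun n => γ (p - 1 - idx p t) / A p γ * F p γ n (p * t - idx p t)
      + cc p γ (idx p t)) atTop
      (𝓝 (γ (p - 1 - idx p t) / A p γ * phi p γ (p * t - idx p t) + cc p γ (idx p t))) :=
    (Tendsto.const_mul _ (hlim hp hγ hu)).add_const _
  simp only [h2] at h1
  exact tendsto_nhds_unique h1 h3


lemma phifunc {j : ℕ} (hj : j < p) {t : ℝ} (h1 : (j:ℝ)/p ≤ t) (h2 : t ≤ ((j:ℝ)+1)/p) :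
    phi p γ t = γ (p - j - 1) / A p γ * phi p γ (p * t - j) + cc p γ j := by
  have hp0 : (0:ℝ) < p := by positivity
  have hjp : (j:ℝ) + 1 ≤ p := by exact_mod_cast Nat.succ_le_of_lt hj
  have ht : t ∈ Set.Icc (0:ℝ) 1 := by
    constructor
    · exact le_trans (by positivity) h1
    · exact le_trans h2 (by rw [div_le_one hp0]; linarith)
  have hcsucc := csucc hp hγ hj
  rw [show p - 1 - j = p - j - 1 by omega] at hcsucc
  by_cases hb : t = ((j:ℝ)+1)/p
  · subst hb
    have hpt : (p:ℝ) * (((j:ℝ)+1)/p) - j = 1 := by field_simp; ring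
    rw [hpt, phi1 hp hγ, mul_one, ← hcsucc]
    rcases eq_or_lt_of_le (Nat.succ_le_of_lt hj) with heq | hlt2
    · -- j + 1 = p, t = 1
      have ht1 : ((j:ℝ)+1)/p = 1 := by
        rw [div_eq_one_iff_eq hp0.ne']
        exact_mod_cast congrArg (Nat.cast : ℕ → ℝ) heq
      rw [ht1, phi1 hp hγ, show j + 1 = p from heq, ccp hp hγ]
    · -- j + 1 < p
      have htm : ((j:ℝ)+1)/p ∈ Set.Icc (0:ℝ) 1 := ht
      have hfloor : ⌊(((j:ℝ)+1)/p) * p⌋ = (j:ℤ) + 1 := by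
        rw [show (((j:ℝ)+1)/p) * p = ((j:ℝ)+1) by field_simp]
        rw [show ((j:ℝ)+1) = (((j:ℤ)+1 : ℤ) : ℝ) by push_cast; ring]
        exact Int.floor_intCast _
      have hidx : idx p (((j:ℝ)+1)/p) = j + 1 := by
        rw [idx, hfloor]
        rw [show ((j:ℤ)+1).toNat = j + 1 by omega]
        exact min_eq_left (by omega)
      have hfix := phifix hp hγ htm
      rw [hidx] at hfix
      have hpt2 : (p:ℝ) * (((j:ℝ)+1)/p) - ((j:ℕ)+1 : ℕ) = 0 := by push_cast; field_simp; ring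
      rw [hpt2, phi0 hp hγ, mul_zero, zero_add] at hfix
      exact hfix
  · have hlt : t < ((j:ℝ)+1)/p := lt_of_le_of_ne h2 hb
    have hfloor : ⌊t * p⌋ = (j:ℤ) := by
      rw [Int.floor_eq_iff]
      constructor
      · rw [div_le_iff₀ hp0] at h1; push_cast; linarith
      · rw [lt_div_iff₀ hp0] at hlt; push_cast; linarith
    have hidx : idx p t = j := by
      rw [idx, hfloor, show ((j:ℤ)).toNat = j by omega]
      exact min_eq_left (by omega)
    have hfix := phifix hp hγ ht
    rw [hidx, show p - 1 - j = p - j - 1 by omega] at hfix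
    exact hfix

lemma grid : ∀ n k : ℕ, k + 1 ≤ p ^ n →
    0 < phi p γ ((k+1 : ℕ)/(p:ℝ)^n) - phi p γ ((k : ℕ)/(p:ℝ)^n) ∧
    phi p γ ((k+1 : ℕ)/(p:ℝ)^n) - phi p γ ((k : ℕ)/(p:ℝ)^n) ≤ r p γ ^ n := by
  intro n
  induction n with
  | zero =>
    intro k hk
    rw [pow_zero] at hk
    have hk0 : k = 0 := by omega
    subst hk0
    norm_num [phi0 hp hγ, phi1 hp hγ]
  | succ n ih =>
    intro k hk
    have hp0 : (0:ℝ) < p := by positivity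
    have hpn : (0:ℝ) < (p:ℝ)^n := by positivity
    obtain ⟨j, k', hjp, hk'lt, hkeq⟩ :
        ∃ j k', j < p ∧ k' < p ^ n ∧ k = p ^ n * j + k' := by
      refine ⟨k / p ^ n, k % p ^ n, ?_, Nat.mod_lt _ (by positivity), (Nat.div_add_mod k (p^n)).symm⟩
      apply Nat.div_lt_of_lt_mul
      have hps : p ^ n * p = p ^ (n+1) := by ring
      rw [hps]
      omega
    -- real identities
    have e1 : ((k:ℕ) : ℝ) / (p:ℝ)^(n+1) = (j:ℝ)/p + (k' : ℝ)/(p:ℝ)^(n+1) := by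
      rw [hkeq]; push_cast
      field_simp
      ring
    have e2 : ((k+1:ℕ) : ℝ) / (p:ℝ)^(n+1) = (j:ℝ)/p + ((k'+1 : ℕ) : ℝ)/(p:ℝ)^(n+1) := by
      rw [hkeq]; push_cast
      field_simp
      ring
    have hb1 : (j:ℝ)/p ≤ ((k:ℕ) : ℝ) / (p:ℝ)^(n+1) := by
      rw [e1]
      have : (0:ℝ) ≤ (k' : ℝ)/(p:ℝ)^(n+1) := by positivity
      linarith
    have hb2 : ((k+1:ℕ) : ℝ) / (p:ℝ)^(n+1) ≤ ((j:ℝ)+1)/p := by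
      rw [e2]
      have h3 : ((k'+1 : ℕ) : ℝ) ≤ (p:ℝ)^n := by exact_mod_cast hk'lt
      have h4 : ((k'+1 : ℕ) : ℝ)/(p:ℝ)^(n+1) ≤ 1/(p:ℝ) := by
        rw [div_le_div_iff₀ (by positivity) hp0, one_mul]
        calc ((k'+1 : ℕ) : ℝ) * p ≤ (p:ℝ)^n * p := by nlinarith
          _ = (p:ℝ)^(n+1) := by rw [pow_succ]
      rw [add_div]
      linarith
    have hb0 : ((k:ℕ) : ℝ) / (p:ℝ)^(n+1) ≤ ((k+1:ℕ) : ℝ) / (p:ℝ)^(n+1) := by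
      apply div_le_div_of_nonneg_right _ (by positivity)
      push_cast; linarith
    have hf1 := phifunc hp hγ hjp hb1 (le_trans hb0 hb2)
    have hf2 := phifunc hp hγ hjp (le_trans hb1 hb0) hb2
    have eu1 : (p:ℝ) * (((k:ℕ) : ℝ) / (p:ℝ)^(n+1)) - (j:ℝ) = (k' : ℝ)/(p:ℝ)^n := by
      rw [e1]; field_simp; ring
    have eu2 : (p:ℝ) * (((k+1:ℕ) : ℝ) / (p:ℝ)^(n+1)) - (j:ℝ) = ((k'+1:ℕ) : ℝ)/(p:ℝ)^n := by
      rw [e2]; push_cast; field_simp; ring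
    rw [eu1] at hf1
    rw [eu2] at hf2
    have hdiff : phi p γ (((k+1:ℕ) : ℝ) / (p:ℝ)^(n+1)) - phi p γ (((k:ℕ) : ℝ) / (p:ℝ)^(n+1))
        = γ (p - j - 1) / A p γ *
          (phi p γ (((k'+1:ℕ) : ℝ)/(p:ℝ)^n) - phi p γ ((k' : ℝ)/(p:ℝ)^n)) := by
      rw [hf1, hf2]; ring
    obtain ⟨ihl, ihu⟩ := ih k' (by omega)
    have hγpos := hγ (p - j - 1) (by omega)
    have hApos := hA hp hγ
    have hgrj := hgr hp hγ (show p - j - 1 < p by omega)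
    constructor
    · rw [hdiff]
      positivity
    · rw [hdiff, pow_succ']
      apply mul_le_mul hgrj ihu (by linarith) (hr0 hp hγ).le


lemma phistrict : StrictMonoOn (phi p γ) (Set.Icc 0 1) := by
  intro s hs t ht hst
  have hp0 : (0:ℝ) < p := by positivity
  obtain ⟨n, hn⟩ : ∃ n : ℕ, (2:ℝ) < (t - s) * (p:ℝ) ^ n := by
    have h2 : Tendsto (fun n : ℕ => (t - s) * (p:ℝ) ^ n) atTop atTop :=
      Tendsto.const_mul_atTop (by linarith)
        (tendsto_pow_atTop_atTop_of_one_lt (by exact_mod_cast (by omega : 1 < p)))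
    exact (h2.eventually_gt_atTop 2).exists
  have hpn : (0:ℝ) < (p:ℝ)^n := by positivity
  have hs0 : (0:ℝ) ≤ s := hs.1
  set k : ℕ := (⌈s * (p:ℝ) ^ n⌉).toNat with hkdef
  have hceil0 : (0:ℤ) ≤ ⌈s * (p:ℝ)^n⌉ := Int.ceil_nonneg (by positivity)
  have hk1 : s * (p:ℝ) ^ n ≤ (k:ℝ) := by
    rw [hkdef]
    have : ((((⌈s * (p:ℝ)^n⌉).toNat : ℕ) : ℤ) : ℝ) = ((⌈s * (p:ℝ)^n⌉ : ℤ) : ℝ) := by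
      exact_mod_cast congrArg (fun z : ℤ => (z:ℝ)) (Int.toNat_of_nonneg hceil0)
    push_cast at this ⊢
    rw [this]
    exact Int.le_ceil _
  have hk2 : (k:ℝ) ≤ s * (p:ℝ) ^ n + 1 := by
    rw [hkdef]
    have h3 : (⌈s * (p:ℝ)^n⌉ : ℝ) < s * (p:ℝ)^n + 1 := Int.ceil_lt_add_one _
    have : ((((⌈s * (p:ℝ)^n⌉).toNat : ℕ) : ℤ) : ℝ) = ((⌈s * (p:ℝ)^n⌉ : ℤ) : ℝ) := by
      exact_mod_cast congrArg (fun z : ℤ => (z:ℝ)) (Int.toNat_of_nonneg hceil0)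
    push_cast at this ⊢
    rw [this]
    linarith
  have hs_le : s ≤ (k:ℝ)/(p:ℝ)^n := by rw [le_div_iff₀ hpn]; linarith
  have ht_ge : ((k+1:ℕ):ℝ)/(p:ℝ)^n ≤ t := by
    rw [div_le_iff₀ hpn]
    push_cast
    nlinarith
  have hkb : k + 1 ≤ p ^ n := by
    have h4 : ((k+1:ℕ):ℝ) ≤ (p:ℝ)^n := by
      have ht1 : t ≤ 1 := ht.2
      have := le_trans ht_ge ht1
      rw [div_le_one hpn] at this
      exact this
    have h5 : (((k+1 : ℕ)):ℝ) ≤ ((p^n : ℕ) : ℝ) := by push_cast at h4 ⊢; linarith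
    exact_mod_cast h5
  obtain ⟨hgt, _⟩ := grid hp hγ n k hkb
  have hmem1 : (k:ℝ)/(p:ℝ)^n ∈ Set.Icc (0:ℝ) 1 := by
    constructor
    · positivity
    · rw [div_le_one hpn]
      have : ((k:ℕ):ℝ) ≤ ((p^n : ℕ):ℝ) := by exact_mod_cast (by omega : k ≤ p ^ n)
      push_cast at this ⊢
      linarith
  have hmem2 : ((k+1:ℕ):ℝ)/(p:ℝ)^n ∈ Set.Icc (0:ℝ) 1 := by
    constructor
    · positivity
    · rw [div_le_one hpn]
      have : ((k+1:ℕ):ℝ) ≤ ((p^n : ℕ):ℝ) := by exact_mod_cast hkb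
      push_cast at this ⊢
      linarith
  have m1 : phi p γ s ≤ phi p γ ((k:ℝ)/(p:ℝ)^n) := phimono hp hγ hs hmem1 hs_le
  have m2 : phi p γ (((k+1:ℕ):ℝ)/(p:ℝ)^n) ≤ phi p γ t := phimono hp hγ hmem2 ht ht_ge
  have : phi p γ ((k:ℝ)/(p:ℝ)^n) < phi p γ (((k+1:ℕ):ℝ)/(p:ℝ)^n) := by linarith [hgt]
  linarith

lemma osc {n : ℕ} {s t : ℝ} (hs : s ∈ Set.Icc (0:ℝ) 1) (ht : t ∈ Set.Icc (0:ℝ) 1)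
    (hst : s ≤ t) (hd : t - s ≤ 1/(p:ℝ)^n) :
    phi p γ t - phi p γ s ≤ 2 * r p γ ^ n := by
  have hr0 := hr0 hp hγ
  have hrn : (0:ℝ) < r p γ ^n := pow_pos hr0 n
  have hp0 : (0:ℝ) < p := by positivity
  have hpn : (0:ℝ) < (p:ℝ)^n := by positivity
  by_cases h1 : s = 1
  · have h2 : t = 1 := le_antisymm ht.2 (h1 ▸ hst)
    rw [h1, h2]
    simp
    positivity
  have hs1 : s < 1 := lt_of_le_of_ne hs.2 h1
  set k : ℕ := (⌊s * (p:ℝ)^n⌋).toNat with hkdef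
  have hfl0 : (0:ℤ) ≤ ⌊s * (p:ℝ)^n⌋ := Int.floor_nonneg.mpr (by have := hs.1; positivity)
  have hcast : ((((⌊s * (p:ℝ)^n⌋).toNat : ℕ) : ℤ) : ℝ) = ((⌊s * (p:ℝ)^n⌋ : ℤ) : ℝ) := by
    exact_mod_cast congrArg (fun z : ℤ => (z:ℝ)) (Int.toNat_of_nonneg hfl0)
  have hk1 : (k:ℝ) ≤ s * (p:ℝ)^n := by
    rw [hkdef]
    push_cast at hcast ⊢
    rw [hcast]
    exact Int.floor_le _
  have hk2 : s * (p:ℝ)^n < (k:ℝ) + 1 := by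
    rw [hkdef]
    push_cast at hcast ⊢
    rw [hcast]
    exact Int.lt_floor_add_one _
  have hklt : k + 1 ≤ p ^ n := by
    have : (k:ℝ) < ((p^n : ℕ):ℝ) := by
      push_cast
      nlinarith
    have : k < p ^ n := by exact_mod_cast this
    omega
  have hsk : (k:ℝ)/(p:ℝ)^n ≤ s := by rw [div_le_iff₀ hpn]; linarith
  have hmemk : (k:ℝ)/(p:ℝ)^n ∈ Set.Icc (0:ℝ) 1 := by
    constructor
    · positivity
    · rw [div_le_one hpn]
      have : ((k:ℕ):ℝ) ≤ ((p^n : ℕ):ℝ) := by exact_mod_cast (by omega : k ≤ p ^ n)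
      push_cast at this ⊢; linarith
  have m0 : phi p γ ((k:ℝ)/(p:ℝ)^n) ≤ phi p γ s := phimono hp hγ hmemk hs hsk
  obtain ⟨_, hub1⟩ := grid hp hγ n k hklt
  by_cases h2 : t ≤ ((k+1:ℕ):ℝ)/(p:ℝ)^n
  · have hmem1 : ((k+1:ℕ):ℝ)/(p:ℝ)^n ∈ Set.Icc (0:ℝ) 1 := by
      constructor
      · positivity
      · rw [div_le_one hpn]
        have : ((k+1:ℕ):ℝ) ≤ ((p^n : ℕ):ℝ) := by exact_mod_cast hklt
        push_cast at this ⊢; linarith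
    have m1 : phi p γ t ≤ phi p γ (((k+1:ℕ):ℝ)/(p:ℝ)^n) := phimono hp hγ ht hmem1 h2
    have : ((k:ℕ):ℝ) = (k:ℝ) := rfl
    linarith
  · push_neg at h2
    have hk2p : k + 2 ≤ p ^ n := by
      have h3 : ((k+1:ℕ):ℝ) < (p:ℝ)^n := by
        have := lt_of_lt_of_le h2 ht.2
        rw [div_lt_one hpn] at this
        exact this
      have h4 : ((k+1:ℕ):ℝ) < ((p^n : ℕ):ℝ) := by push_cast at h3 ⊢; linarith
      have : k + 1 < p ^ n := by exact_mod_cast h4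
      omega
    have htk2 : t ≤ ((k+2:ℕ):ℝ)/(p:ℝ)^n := by
      rw [le_div_iff₀ hpn]
      push_cast
      have : t ≤ s + 1/(p:ℝ)^n := by linarith
      have h5 : t * (p:ℝ)^n ≤ s * (p:ℝ)^n + 1 := by
        have := mul_le_mul_of_nonneg_right this hpn.le
        rw [add_mul, div_mul_cancel₀] at this
        · linarith
        · exact hpn.ne'
      linarith
    have hmem2 : ((k+2:ℕ):ℝ)/(p:ℝ)^n ∈ Set.Icc (0:ℝ) 1 := by
      constructor
      · positivity
      · rw [div_le_one hpn]
        have : ((k+2:ℕ):ℝ) ≤ ((p^n : ℕ):ℝ) := by exact_mod_cast hk2p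
        push_cast at this ⊢; linarith
    have m2 : phi p γ t ≤ phi p γ (((k+2:ℕ):ℝ)/(p:ℝ)^n) := phimono hp hγ ht hmem2 htk2
    obtain ⟨_, hub2⟩ := grid hp hγ n (k+1) hk2p
    have e1 : ((k+1)+1 : ℕ) = (k+2 : ℕ) := by omega
    rw [e1] at hub2
    linarith

lemma phicont : ContinuousOn (phi p γ) (Set.Icc 0 1) := by
  intro x hx
  rw [Metric.continuousWithinAt_iff]
  intro ε hε
  obtain ⟨n, hn⟩ : ∃ n : ℕ, 2 * r p γ ^ n < ε := by
    have h1 : Tendsto (fun n : ℕ => 2 * r p γ ^ n) atTop (𝓝 (2 * 0)) :=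
      (tendsto_pow_atTop_nhds_zero_of_lt_one (hr0 hp hγ).le (hr1 hp hγ)).const_mul 2
    rw [mul_zero] at h1
    exact (h1.eventually (gt_mem_nhds hε)).exists
  refine ⟨1/(p:ℝ)^n, by positivity, ?_⟩
  intro y hy hdist
  rw [Real.dist_eq] at hdist
  rw [Real.dist_eq]
  rcases le_total y x with hyx | hxy
  · have h2 : x - y ≤ 1/(p:ℝ)^n := by
      have := abs_le.mp hdist.le
      linarith [this.1]
    have h3 := osc hp hγ hy hx hyx h2
    have h4 : phi p γ y ≤ phi p γ x := phimono hp hγ hy hx hyx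
    rw [abs_of_nonpos (by linarith)]
    linarith
  · have h2 : y - x ≤ 1/(p:ℝ)^n := by
      have := abs_le.mp hdist.le
      linarith [this.2]
    have h3 := osc hp hγ hx hy hxy h2
    have h4 : phi p γ x ≤ phi p γ y := phimono hp hγ hx hy hxy
    rw [abs_of_nonneg (by linarith)]
    linarith


lemma unique (ψ : ℝ → ℝ) (hψc : ContinuousOn ψ (Set.Icc 0 1))
    (hψf : ∀ j < p, ∀ t : ℝ, (j:ℝ)/p ≤ t → t ≤ ((j:ℝ)+1)/p →
      ψ t = γ (p - j - 1) / A p γ * ψ (p * t - j) + cc p γ j) :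
    Set.EqOn (phi p γ) ψ (Set.Icc 0 1) := by
  have hA := hA hp hγ
  have hp0 : (0:ℝ) < p := by positivity
  have hcont : ContinuousOn (fun t => |phi p γ t - ψ t|) (Set.Icc 0 1) :=
    ((phicont hp hγ).sub hψc).abs
  obtain ⟨t0, ht0, hmax⟩ :=
    isCompact_Icc.exists_isMaxOn (Set.nonempty_Icc.mpr (by norm_num)) hcont
  rw [isMaxOn_iff] at hmax
  have hjlt : idx p t0 < p := idx_lt hp hγ t0
  have hb1 : ((idx p t0 : ℕ):ℝ)/p ≤ t0 := by
    rw [div_le_iff₀ hp0]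
    have := idx_le hp hγ (p := p) ht0.1
    have hc : t0 * (p:ℝ) = (p:ℝ) * t0 := mul_comm _ _
    linarith
  have hb2 : t0 ≤ (((idx p t0 : ℕ):ℝ)+1)/p := by
    rw [le_div_iff₀ hp0]
    have := idx_ge hp hγ (p := p) ht0.2
    linarith
  have hu := u_mem hp hγ ht0
  have h1 := phifunc hp hγ hjlt hb1 hb2
  have h2 := hψf (idx p t0) hjlt t0 hb1 hb2
  have hγpos := hγ (p - idx p t0 - 1) (by omega)
  have hkey : |phi p γ t0 - ψ t0| ≤ r p γ * |phi p γ t0 - ψ t0| := by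
    have he : phi p γ t0 - ψ t0 = γ (p - idx p t0 - 1) / A p γ *
        (phi p γ (p * t0 - idx p t0) - ψ (p * t0 - idx p t0)) := by
      rw [h1, h2]; ring
    calc |phi p γ t0 - ψ t0|
        = γ (p - idx p t0 - 1) / A p γ *
          |phi p γ (p * t0 - idx p t0) - ψ (p * t0 - idx p t0)| := by
          rw [he, abs_mul, abs_of_nonneg (by positivity)]
      _ ≤ r p γ * |phi p γ t0 - ψ t0| :=
          mul_le_mul (hgr hp hγ (by omega)) (hmax _ hu) (abs_nonneg _) (hr0 hp hγ).le
  have hM0 : |phi p γ t0 - ψ t0| ≤ 0 := by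
    nlinarith [hr1 hp hγ, abs_nonneg (phi p γ t0 - ψ t0)]
  intro t ht
  have h3 : |phi p γ t - ψ t| ≤ 0 := le_trans (hmax t ht) hM0
  have h4 : |phi p γ t - ψ t| = 0 := le_antisymm h3 (abs_nonneg _)
  exact sub_eq_zero.mp (abs_eq_zero.mp h4)

lemma digit (b : ℕ → ℕ) (hb : ∀ j, b j < p) :
    phi p γ (∑' j : ℕ, (b j : ℝ) / (p : ℝ) ^ (j + 1)) =
      ∑' j : ℕ, cc p γ (b j) * ∏ i ∈ Finset.range j, (γ (p - 1 - b i) / A p γ) := by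
  have hA := hA hp hγ
  have hp0 : (0:ℝ) < p := by positivity
  have hp1 : (1:ℝ) < p := by exact_mod_cast (by omega : 1 < p)
  have hr0 := hr0 hp hγ
  have hr1 := hr1 hp hγ
  have hgeo : Summable (fun j : ℕ => (1/(p:ℝ))^j) :=
    summable_geometric_of_lt_one (by positivity) (by rw [div_lt_one hp0]; exact hp1)
  have hbound : ∀ n j : ℕ, (b (n+j) : ℝ)/(p:ℝ)^(j+1) ≤ (1/(p:ℝ))^j := by
    intro n j
    have h1 : (b (n+j) : ℝ) ≤ p := by exact_mod_cast (hb (n+j)).le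
    rw [div_pow, one_pow, div_le_div_iff₀ (by positivity) (by positivity), one_mul]
    calc (b (n+j) : ℝ) * (p:ℝ)^j ≤ (p:ℝ) * (p:ℝ)^j := by nlinarith [pow_pos hp0 j]
      _ = (p:ℝ)^(j+1) := by rw [pow_succ]; ring
  have hsummable : ∀ n, Summable (fun j : ℕ => (b (n+j) : ℝ)/(p:ℝ)^(j+1)) := by
    intro n
    exact Summable.of_nonneg_of_le (fun j => by positivity) (hbound n) hgeo
  set S : ℕ → ℝ := fun n => ∑' j : ℕ, (b (n+j) : ℝ)/(p:ℝ)^(j+1) with hSdef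
  have hS0 : ∀ n, 0 ≤ S n := fun n => tsum_nonneg (fun j => by positivity)
  have hgeq : ∀ j : ℕ, ((p:ℝ)-1)/(p:ℝ)^(j+1) = (((p:ℝ)-1)/p) * (1/(p:ℝ))^j := by
    intro j
    rw [div_pow, one_pow]
    rw [div_mul_div_comm, mul_one, pow_succ]
    ring_nf
  have hgsum : ∑' j : ℕ, ((p:ℝ)-1)/(p:ℝ)^(j+1) = 1 := by
    rw [tsum_congr hgeq, tsum_mul_left,
      tsum_geometric_of_lt_one (by positivity) (by rw [div_lt_one hp0]; exact hp1)]
    have hne : (p:ℝ) - 1 ≠ 0 := by linarith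
    field_simp
  have hS1 : ∀ n, S n ≤ 1 := by
    intro n
    rw [hSdef, ← hgsum]
    apply Summable.tsum_le_tsum _ (hsummable n)
    · exact (hgeo.mul_left _).congr (fun j => (hgeq j).symm)
    · intro j
      have h1 : (b (n+j) : ℝ) ≤ (p:ℝ) - 1 := by
        have : b (n+j) + 1 ≤ p := hb (n+j)
        have : ((b (n+j) + 1 : ℕ):ℝ) ≤ ((p:ℕ):ℝ) := by exact_mod_cast this
        push_cast at this
        linarith
      apply div_le_div_of_nonneg_right h1 (by positivity)
  have hrec : ∀ n, S n = (b n : ℝ)/p + S (n+1)/p := by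
    intro n
    have h0 := Summable.tsum_eq_zero_add (hsummable n)
    have h2 : ∀ j : ℕ, (b (n+(j+1)) : ℝ)/(p:ℝ)^((j+1)+1) =
        (1/(p:ℝ)) * ((b ((n+1)+j) : ℝ)/(p:ℝ)^(j+1)) := by
      intro j
      rw [show n+(j+1) = (n+1)+j by omega]
      rw [pow_succ]
      ring
    calc S n = ∑' j : ℕ, (b (n+j) : ℝ)/(p:ℝ)^(j+1) := rfl
      _ = (b (n+0) : ℝ)/(p:ℝ)^(0+1) + ∑' j : ℕ, (b (n+(j+1)) : ℝ)/(p:ℝ)^((j+1)+1) := h0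
      _ = (b n : ℝ)/p + ∑' j : ℕ, (1/(p:ℝ)) * ((b ((n+1)+j) : ℝ)/(p:ℝ)^(j+1)) := by
          rw [tsum_congr h2]
          norm_num
      _ = (b n : ℝ)/p + S (n+1)/p := by
          rw [tsum_mul_left]
          have hs1 : S (n+1) = ∑' j : ℕ, (b ((n+1)+j) : ℝ)/(p:ℝ)^(j+1) := rfl
          rw [hs1]
          ring
  have hmem : ∀ n, (b n : ℝ)/p ≤ S n ∧ S n ≤ ((b n : ℝ)+1)/p := by
    intro n
    have h1 := hrec n
    have h2 := hS0 (n+1)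
    have h3 := hS1 (n+1)
    constructor
    · rw [h1]
      have : 0 ≤ S (n+1)/p := by positivity
      linarith
    · rw [h1, add_div]
      have : S (n+1)/p ≤ 1/p := by
        apply div_le_div_of_nonneg_right h3 hp0.le
      linarith
  have hstep : ∀ n, phi p γ (S n) =
      γ (p - 1 - b n) / A p γ * phi p γ (S (n+1)) + cc p γ (b n) := by
    intro n
    have h1 := phifunc hp hγ (hb n) (hmem n).1 (hmem n).2
    have h2 : (p:ℝ) * S n - (b n : ℝ) = S (n+1) := by
      rw [hrec n]
      field_simp
      ring
    rw [h2] at h1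
    rw [show p - 1 - b n = p - b n - 1 by omega]
    exact h1
  have key : ∀ n, phi p γ (S 0) =
      (∑ j ∈ Finset.range n, cc p γ (b j) * ∏ i ∈ Finset.range j, (γ (p - 1 - b i) / A p γ))
      + (∏ i ∈ Finset.range n, (γ (p - 1 - b i) / A p γ)) * phi p γ (S n) := by
    intro n
    induction n with
    | zero => simp
    | succ n ih =>
      rw [Finset.sum_range_succ, Finset.prod_range_succ, ih, hstep n]
      ring
  have hPnn : ∀ n, 0 ≤ ∏ i ∈ Finset.range n, (γ (p - 1 - b i) / A p γ) := by
    intro n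
    apply Finset.prod_nonneg
    intro i _
    have := hγ (p - 1 - b i) (by have := hb i; omega)
    positivity
  have hPle : ∀ n, ∏ i ∈ Finset.range n, (γ (p - 1 - b i) / A p γ) ≤ r p γ ^ n := by
    intro n
    calc ∏ i ∈ Finset.range n, (γ (p - 1 - b i) / A p γ)
        ≤ ∏ _i ∈ Finset.range n, r p γ := by
          apply Finset.prod_le_prod
          · intro i _
            have := hγ (p - 1 - b i) (by have := hb i; omega)
            positivity
          · intro i _
            exact hgr hp hγ (by have := hb i; omega)
      _ = r p γ ^ n := by rw [Finset.prod_const, Finset.card_range]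
  have hphimem : ∀ n, phi p γ (S n) ∈ Set.Icc (0:ℝ) 1 :=
    fun n => phimem hp hγ ⟨hS0 n, hS1 n⟩
  have htail : Tendsto (fun n => (∏ i ∈ Finset.range n, (γ (p - 1 - b i) / A p γ))
      * phi p γ (S n)) atTop (𝓝 0) := by
    apply squeeze_zero (fun n => mul_nonneg (hPnn n) (hphimem n).1)
      (g := fun n => r p γ ^ n)
    · intro n
      calc (∏ i ∈ Finset.range n, (γ (p - 1 - b i) / A p γ)) * phi p γ (S n)
          ≤ (∏ i ∈ Finset.range n, (γ (p - 1 - b i) / A p γ)) * 1 :=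
            mul_le_mul_of_nonneg_left (hphimem n).2 (hPnn n)
        _ = ∏ i ∈ Finset.range n, (γ (p - 1 - b i) / A p γ) := mul_one _
        _ ≤ r p γ ^ n := hPle n
    · exact tendsto_pow_atTop_nhds_zero_of_lt_one hr0.le hr1
  have hpartial : Tendsto (fun n => ∑ j ∈ Finset.range n,
      cc p γ (b j) * ∏ i ∈ Finset.range j, (γ (p - 1 - b i) / A p γ)) atTop
      (𝓝 (phi p γ (S 0))) := by
    have h1 : Tendsto (fun n => phi p γ (S 0) - (∏ i ∈ Finset.range n, (γ (p - 1 - b i) / A p γ))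
        * phi p γ (S n)) atTop (𝓝 (phi p γ (S 0) - 0)) := tendsto_const_nhds.sub htail
    rw [sub_zero] at h1
    apply h1.congr
    intro n
    rw [key n]
    ring
  have hsum2 : Summable (fun j : ℕ =>
      cc p γ (b j) * ∏ i ∈ Finset.range j, (γ (p - 1 - b i) / A p γ)) := by
    apply Summable.of_nonneg_of_le
      (fun j => mul_nonneg (ccnonneg hp hγ _) (hPnn j))
      (fun j => ?_) (summable_geometric_of_lt_one hr0.le hr1)
    calc cc p γ (b j) * ∏ i ∈ Finset.range j, (γ (p - 1 - b i) / A p γ)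
        ≤ 1 * r p γ ^ j :=
          mul_le_mul (ccle1 hp hγ (hb j).le) (hPle j) (hPnn j) zero_le_one
      _ = r p γ ^ j := one_mul _
  have hfinal := tendsto_nhds_unique hsum2.hasSum.tendsto_sum_nat hpartial
  have hS0eq : (∑' j : ℕ, (b j : ℝ) / (p : ℝ) ^ (j + 1)) = S 0 := by
    rw [hSdef]
    exact tsum_congr (fun j => by rw [Nat.zero_add])
  rw [hS0eq, ← hfinal]

end Basic
end PAryAux





/-- Lemma A.1 (p-ary self-similar function): for `p ≥ 2` and positive weights
`γ_0, …, γ_{p-1}` with `A = ∑_j γ_j`, there is a unique continuous strictly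
increasing `φ : [0,1] → ℝ` with `φ(0) = 0`, `φ(1) = 1` and
`φ(t) = (γ_{p−j−1}/A) φ(pt − j) + (∑_{p−j≤i<p} γ_i)/A` on `[j/p, (j+1)/p]`;
moreover `φ` satisfies the explicit digit formula. -/
theorem pary_selfsimilar (p : ℕ) (hp : 2 ≤ p) (γ : ℕ → ℝ) (hγ : ∀ j < p, 0 < γ j) :
    ∃ φ : ℝ → ℝ,
      (ContinuousOn φ (Set.Icc 0 1) ∧ StrictMonoOn φ (Set.Icc 0 1) ∧
        φ 0 = 0 ∧ φ 1 = 1 ∧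
        (∀ j < p, ∀ t : ℝ, (j : ℝ) / p ≤ t → t ≤ ((j : ℝ) + 1) / p →
          φ t = γ (p - j - 1) / (∑ i ∈ Finset.range p, γ i) * φ (p * t - j)
            + (∑ i ∈ Finset.Ico (p - j) p, γ i) / (∑ i ∈ Finset.range p, γ i))) ∧
      (∀ ψ : ℝ → ℝ,
        (ContinuousOn ψ (Set.Icc 0 1) ∧ StrictMonoOn ψ (Set.Icc 0 1) ∧
          ψ 0 = 0 ∧ ψ 1 = 1 ∧
          (∀ j < p, ∀ t : ℝ, (j : ℝ) / p ≤ t → t ≤ ((j : ℝ) + 1) / p →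
            ψ t = γ (p - j - 1) / (∑ i ∈ Finset.range p, γ i) * ψ (p * t - j)
              + (∑ i ∈ Finset.Ico (p - j) p, γ i) / (∑ i ∈ Finset.range p, γ i))) →
        Set.EqOn φ ψ (Set.Icc 0 1)) ∧
      (∀ b : ℕ → ℕ, (∀ j, b j < p) →
        φ (∑' j : ℕ, (b j : ℝ) / (p : ℝ) ^ (j + 1)) =
          ∑' j : ℕ, (∑ i ∈ Finset.Ico (p - b j) p, γ i) *
            (∏ i ∈ Finset.range j, γ (p - 1 - b i))
              / (∑ i ∈ Finset.range p, γ i) ^ (j + 1)) := by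
  refine ⟨PAryAux.phi p γ,
    ⟨PAryAux.phicont hp hγ, PAryAux.phistrict hp hγ, PAryAux.phi0 hp hγ,
      PAryAux.phi1 hp hγ, ?_⟩, ?_, ?_⟩
  · intro j hj t h1 h2
    exact PAryAux.phifunc hp hγ hj h1 h2
  · intro ψ hψ
    exact PAryAux.unique hp hγ ψ hψ.1 hψ.2.2.2.2
  · intro b hb
    rw [PAryAux.digit hp hγ b hb]
    apply tsum_congr
    intro j
    rw [PAryAux.cc, Finset.prod_div_distrib, Finset.prod_const, Finset.card_range,
      div_mul_div_comm, pow_succ, PAryAux.A]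
    ring
end

section
/- Let p ≥ 2 be an integer, γ_0, …, γ_{p−1} > 0 real numbers, A := ∑_{j=0}^{p−1} γ_j, and let f : ℕ_{≥1} → ℝ satisfy the recurrence f(n) = ∑_{j=0}^{p−1} γ_j · f(⌊(n+j)/p⌋) for all n ≥ p. Extend f to real arguments x ≥ 1 by f(n+t) := (1−φ(t))·f(n) + φ(t)·f(n+1) for integers n ≥ 1 and t ∈ [0,1], where φ : [0,1] → ℝ is the unique continuous strictly increasing function with φ(0) = 0, φ(1) = 1 satisfying φ(t) = (γ_{p−j−1}/A)·φ(pt − j) + (∑_{p−j≤i<p} γ_i)/A for j/p ≤ t ≤ (j+1)/p, j = 0,…,p−1. Then f(x) = A · f(x/p) for all real x ≥ p. -/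
theorem key_split (p : ℕ) (hp : 0 < p) (γ : ℕ → ℝ)
    (f : ℕ → ℝ)
    (hf : ∀ n : ℕ, p ≤ n → f n = ∑ j ∈ Finset.range p, γ j * f ((n + j) / p))
    (n : ℕ) (hn : p ≤ n) :
    f n = (∑ j ∈ Finset.range (p - n % p), γ j) * f (n / p)
        + (∑ j ∈ Finset.Ico (p - n % p) p, γ j) * f (n / p + 1) := by
  have hr : n % p < p := Nat.mod_lt _ hp
  rw [hf n hn]
  rw [Finset.range_eq_Ico, ← Finset.sum_Ico_consecutive _ (Nat.zero_le (p - n % p)) (Nat.sub_le p (n % p))]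
  rw [← Finset.range_eq_Ico, Finset.sum_mul, Finset.sum_mul]
  congr 1
  · apply Finset.sum_congr rfl
    intro j hj
    have hj' : j < p - n % p := Finset.mem_range.mp hj
    have h1 : (n + j) / p = n / p := by
      conv_lhs => rw [← Nat.div_add_mod n p]
      rw [Nat.add_assoc, Nat.mul_add_div hp]
      have : (n % p + j) / p = 0 := Nat.div_eq_of_lt (by omega)
      omega
    rw [h1]
  · apply Finset.sum_congr rfl
    intro j hj
    have hj' := Finset.mem_Ico.mp hj
    have h1 : (n + j) / p = n / p + 1 := by
      conv_lhs => rw [← Nat.div_add_mod n p]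
      rw [Nat.add_assoc, Nat.mul_add_div hp]
      have : (n % p + j) / p = 1 := by
        apply Nat.div_eq_of_lt_le <;> omega
      omega
    rw [h1]

theorem fext_self_similar (p : ℕ) (hp : 2 ≤ p) (γ : ℕ → ℝ) (hγ : ∀ j < p, 0 < γ j)
    (A : ℝ) (hA : A = ∑ j ∈ Finset.range p, γ j)
    (φ : ℝ → ℝ)
    (hφc : ContinuousOn φ (Set.Icc 0 1)) (hφm : StrictMonoOn φ (Set.Icc 0 1))
    (hφ0 : φ 0 = 0) (hφ1 : φ 1 = 1)
    (hφeq : ∀ j < p, ∀ t : ℝ, (j : ℝ) / p ≤ t → t ≤ ((j : ℝ) + 1) / p →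
      φ t = γ (p - j - 1) / A * φ (p * t - j) + (∑ i ∈ Finset.Ico (p - j) p, γ i) / A)
    (f : ℕ → ℝ)
    (hf : ∀ n : ℕ, p ≤ n → f n = ∑ j ∈ Finset.range p, γ j * f ((n + j) / p))
    (fext : ℝ → ℝ)
    (hfext : ∀ n : ℕ, 1 ≤ n → ∀ t ∈ Set.Icc (0 : ℝ) 1,
      fext ((n : ℝ) + t) = (1 - φ t) * f n + φ t * f (n + 1))
    : ∀ x : ℝ, (p : ℝ) ≤ x → fext x = A * fext (x / p) := by
  intro x hx
  have hp0 : 0 < p := by omega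
  have hpR : (0 : ℝ) < p := by positivity
  have hA0 : 0 < A := by
    rw [hA]
    apply Finset.sum_pos (fun j hj => hγ j (Finset.mem_range.mp hj))
    exact ⟨0, Finset.mem_range.mpr hp0⟩
  have hAne : A ≠ 0 := ne_of_gt hA0
  set n : ℕ := ⌊x⌋₊ with hn_def
  have hn : p ≤ n := Nat.le_floor hx
  have hx0 : 0 ≤ x := le_trans (le_of_lt hpR) hx
  set t : ℝ := x - n with ht_def
  have ht0 : 0 ≤ t := by
    have := Nat.floor_le hx0
    simp only [ht_def, hn_def]; linarith
  have ht1 : t ≤ 1 := by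
    have := Nat.lt_floor_add_one x
    simp only [ht_def, hn_def]; linarith
  set m : ℕ := n / p with hm_def
  set r : ℕ := n % p with hr_def
  have hr : r < p := Nat.mod_lt _ hp0
  have hm1 : 1 ≤ m := (Nat.one_le_div_iff hp0).mpr hn
  have hnmr : n = p * m + r := (Nat.div_add_mod n p).symm
  have hnR : (n : ℝ) = p * m + r := by exact_mod_cast congrArg (Nat.cast : ℕ → ℝ) hnmr
  have hx_eq : x = (n : ℝ) + t := by simp [ht_def]
  set s : ℝ := ((r : ℝ) + t) / p with hs_def
  have hs0 : 0 ≤ s := by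
    apply div_nonneg _ (le_of_lt hpR)
    positivity
  have hs1 : s ≤ 1 := by
    rw [div_le_one hpR]
    have : (r : ℝ) + 1 ≤ p := by exact_mod_cast hr
    linarith
  have hdiv : x / p = (m : ℝ) + s := by
    rw [hx_eq, hnR, hs_def]
    field_simp
    ring
  -- fext values
  have hfx : fext x = (1 - φ t) * f n + φ t * f (n + 1) := by
    rw [hx_eq]
    exact hfext n (by omega) t ⟨ht0, ht1⟩
  have hfxp : fext (x / p) = (1 - φ s) * f m + φ s * f (m + 1) := by
    rw [hdiv]
    exact hfext m hm1 s ⟨hs0, hs1⟩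
  -- φ s relation
  have hφs : φ s = γ (p - r - 1) / A * φ t + (∑ i ∈ Finset.Ico (p - r) p, γ i) / A := by
    have h1 : (r : ℝ) / p ≤ s := by
      rw [hs_def, div_le_div_iff₀ hpR hpR]
      nlinarith
    have h2 : s ≤ ((r : ℝ) + 1) / p := by
      rw [hs_def, div_le_div_iff₀ hpR hpR]
      nlinarith
    have h3 : (p : ℝ) * s - r = t := by
      rw [hs_def]; field_simp; ring
    have := hφeq r hr s h1 h2
    rwa [h3] at this
  -- f n relation
  have hfn : f n = (∑ j ∈ Finset.range (p - r), γ j) * f m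
      + (∑ j ∈ Finset.Ico (p - r) p, γ j) * f (m + 1) :=
    key_split p hp0 γ f hf n hn
  -- abbreviations
  set B : ℝ := ∑ j ∈ Finset.range (p - r), γ j with hB_def
  set S : ℝ := ∑ j ∈ Finset.Ico (p - r) p, γ j with hS_def
  set g : ℝ := γ (p - r - 1) with hg_def
  have hABS : A = B + S := by
    rw [hA, hB_def, hS_def]
    exact (Finset.sum_range_add_sum_Ico γ (Nat.sub_le p r)).symm
  have hAφs : A * φ s = g * φ t + S := by
    rw [hφs]; field_simp
  -- f (n+1) relation: two cases
  have hfn1 : f (n + 1) = (A - S - g) * f m + (S + g) * f (m + 1) := by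
    rcases Nat.lt_or_ge (r + 1) p with hcase | hcase
    · have e : n + 1 = p * m + (r + 1) := by omega
      have h1 : (n + 1) % p = r + 1 := by
        rw [e, Nat.mul_add_mod, Nat.mod_eq_of_lt hcase]
      have h2 : (n + 1) / p = m := by
        rw [e, Nat.mul_add_div hp0, Nat.div_eq_of_lt hcase]
        omega
      have hthis := key_split p hp0 γ f hf (n + 1) (le_trans hn (Nat.le_succ n))
      rw [h1, h2] at hthis
      have hsplit1 : (∑ j ∈ Finset.range (p - (r + 1)), γ j) = B - g := by
        have hBalt : B = (∑ j ∈ Finset.range (p - (r + 1)), γ j) + g := by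
          calc B = ∑ j ∈ Finset.range (p - (r + 1) + 1), γ j := by
                rw [hB_def, show p - r = p - (r + 1) + 1 by omega]
            _ = (∑ j ∈ Finset.range (p - (r + 1)), γ j) + γ (p - (r + 1)) :=
                Finset.sum_range_succ _ _
            _ = (∑ j ∈ Finset.range (p - (r + 1)), γ j) + g := by
                rw [hg_def, show p - r - 1 = p - (r + 1) by omega]
        linarith
      have hsplit2 : (∑ j ∈ Finset.Ico (p - (r + 1)) p, γ j) = g + S := by
        rw [Finset.sum_eq_sum_Ico_succ_bot (by omega : p - (r + 1) < p)]
        have e4 : p - (r + 1) + 1 = p - r := by omega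
        have e5 : p - (r + 1) = p - r - 1 := by omega
        rw [e4, e5, ← hg_def, ← hS_def]
      rw [hthis, hsplit1, hsplit2]
      linear_combination (-(f m)) * hABS
    · -- r + 1 = p, so n + 1 = p * (m + 1)
      have e : n + 1 = p * (m + 1) := by rw [Nat.mul_add, Nat.mul_one]; omega
      have h1 : (n + 1) % p = 0 := by rw [e]; exact Nat.mul_mod_right p (m + 1)
      have h2 : (n + 1) / p = m + 1 := by rw [e]; exact Nat.mul_div_cancel_left _ hp0
      have hthis := key_split p hp0 γ f hf (n + 1) (le_trans hn (Nat.le_succ n))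
      rw [h1, h2, Nat.sub_zero, Finset.Ico_self, Finset.sum_empty, ← hA] at hthis
      have hS_eq : S + g = A := by
        have e3 : p - r = 1 := by omega
        have e4 : p - r - 1 = 0 := by omega
        rw [hS_def, hg_def, e4, e3, hA, Finset.range_eq_Ico,
          Finset.sum_eq_sum_Ico_succ_bot hp0]
        ring
      rw [hthis]
      linear_combination (f m - f (m + 1)) * hS_eq
  -- final algebra
  rw [hfx, hfxp, hfn, hfn1]
  linear_combination (f m - f (m + 1)) * hAφs + (φ t - 1) * f m * hABS
end

section
/- Let p ≥ 2 be an integer, γ_0, …, γ_{p−1} > 0 real numbers, A := ∑_{j=0}^{p−1} γ_j, ρ := log_p A, and let f : ℕ_{≥1} → ℝ satisfy the recurrence f(n) = ∑_{j=0}^{p−1} γ_j · f(⌊(n+j)/p⌋) for all n ≥ p. Let P(t) := A^{−{t}} · f(p^{{t}}) where f is extended to real x ≥ 1 by f(n+t) := (1−φ(t))·f(n) + φ(t)·f(n+1) (n ≥ 1 integer, t ∈ [0,1], φ the unique continuous strictly increasing function with φ(0)=0, φ(1)=1 satisfying φ(t) = (γ_{p−j−1}/A)·φ(pt−j) + (∑_{p−j≤i<p}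 γ_i)/A on [j/p,(j+1)/p]). Then sup_{n≥1} f(n)/n^ρ = limsup_{n→∞} f(n)/n^ρ = max_{t∈[0,1]} P(t) and inf_{n≥1} f(n)/n^ρ = liminf_{n→∞} f(n)/n^ρ = min_{t∈[0,1]} P(t). -/
open Filter Set Real

private lemma icc_paste_aux {f : ℝ → ℝ} {a b c : ℝ} (hab : a ≤ b) (hbc : b ≤ c)
    (h1 : ContinuousOn f (Set.Icc a b)) (h2 : ContinuousOn f (Set.Icc b c)) :
    ContinuousOn f (Set.Icc a c) := by
  have hu : ContinuousOn f (Set.Icc a b ∪ Set.Icc b c) := by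
    intro x hx
    apply ContinuousWithinAt.union
    · by_cases h : x ∈ Set.Icc a b
      · exact h1 x h
      · exact continuousWithinAt_of_notMem_closure (by rwa [isClosed_Icc.closure_eq])
    · by_cases h : x ∈ Set.Icc b c
      · exact h2 x h
      · exact continuousWithinAt_of_notMem_closure (by rwa [isClosed_Icc.closure_eq])
  rwa [Set.Icc_union_Icc_eq_Icc hab hbc] at hu

private lemma selfSimilar_aux (p : ℕ) (hp : 2 ≤ p) (γ : ℕ → ℝ) (hγ : ∀ j < p, 0 < γ j)
    (A : ℝ) (hA : A = ∑ j ∈ Finset.range p, γ j)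
    (φ : ℝ → ℝ) (hφ0 : φ 0 = 0)
    (hφeq : ∀ j < p, ∀ t : ℝ, (j : ℝ) / p ≤ t → t ≤ ((j : ℝ) + 1) / p →
      φ t = γ (p - j - 1) / A * φ (p * t - j) + (∑ i ∈ Finset.Ico (p - j) p, γ i) / A)
    (f : ℕ → ℝ)
    (hf : ∀ n : ℕ, p ≤ n → f n = ∑ j ∈ Finset.range p, γ j * f ((n + j) / p))
    (fext : ℝ → ℝ)
    (hfext : ∀ n : ℕ, 1 ≤ n → ∀ t ∈ Set.Icc (0 : ℝ) 1,
      fext ((n : ℝ) + t) = (1 - φ t) * f n + φ t * f (n + 1)) :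
    ∀ x : ℝ, 1 ≤ x → fext (p * x) = A * fext x := by
  have hp0 : 0 < p := by omega
  have hpR : (1:ℝ) < p := by exact_mod_cast hp
  have hA0 : 0 < A := by
    rw [hA]
    exact Finset.sum_pos (fun j hj => hγ j (Finset.mem_range.mp hj))
      ⟨0, Finset.mem_range.mpr (by omega)⟩
  intro x hx
  set m : ℕ := ⌊x⌋₊ with hmdef
  have hm1 : 1 ≤ m := Nat.le_floor (by exact_mod_cast hx)
  have hmx : (m:ℝ) ≤ x := Nat.floor_le (by linarith)
  have hxm : x < m + 1 := Nat.lt_floor_add_one x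
  set t : ℝ := x - m with htdef
  have ht0 : 0 ≤ t := by simp only [htdef]; linarith
  have ht1 : t < 1 := by simp only [htdef]; linarith
  set j : ℕ := ⌊(p:ℝ) * t⌋₊ with hjdef
  have hjt : (j:ℝ) ≤ p * t := Nat.floor_le (by positivity)
  have hjt' : (p:ℝ) * t < j + 1 := Nat.lt_floor_add_one _
  have hjp : j < p := by
    have h1 : (p:ℝ) * t < ((p:ℕ) : ℝ) := by push_cast; nlinarith
    have h2 : 0 ≤ (p:ℝ) * t := by positivity
    exact (Nat.floor_lt h2).mpr h1
  set s : ℝ := (p:ℝ) * t - j with hsdef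
  have hs0 : 0 ≤ s := by simp only [hsdef]; linarith
  have hs1 : s < 1 := by simp only [hsdef]; linarith
  -- value of fext x
  have e1 : fext x = (1 - φ t) * f m + φ t * f (m + 1) := by
    have h := hfext m hm1 t ⟨ht0, ht1.le⟩
    rw [show (m:ℝ) + t = x by simp [htdef]] at h
    exact h
  -- value of fext (p x)
  have e2 : fext ((p:ℝ) * x) = (1 - φ s) * f (p * m + j) + φ s * f (p * m + j + 1) := by
    have h := hfext (p * m + j) (by nlinarith [hm1, hp0]) s ⟨hs0, hs1.le⟩
    have hcast : ((p * m + j : ℕ) : ℝ) + s = (p:ℝ) * x := by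
      push_cast
      simp only [hsdef, htdef]
      ring
    rw [hcast] at h
    exact h
  -- division identity
  have hdiv : ∀ j' i : ℕ, j' ≤ p → i < p → (p * m + j' + i) / p = if i < p - j' then m else m + 1 := by
    intro j' i hj' hi
    rw [show p * m + j' + i = p * (m) + (j' + i) by ring, Nat.mul_add_div hp0]
    by_cases h : i < p - j'
    · rw [Nat.div_eq_of_lt (by omega), if_pos h]
      omega
    · rw [if_neg h, show (j' + i) / p = 1 from Nat.div_eq_of_lt_le (by omega) (by omega)]
  -- recurrence in split form
  have hrec : ∀ j' : ℕ, j' ≤ p → f (p * m + j') =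
      (∑ i ∈ Finset.range (p - j'), γ i) * f m + (∑ i ∈ Finset.Ico (p - j') p, γ i) * f (m + 1) := by
    intro j' hj'
    rw [hf (p * m + j') (by nlinarith [hm1])]
    rw [Finset.range_eq_Ico, ← Finset.sum_Ico_consecutive _ (Nat.zero_le (p - j')) (Nat.sub_le p j')]
    congr 1
    · rw [← Finset.range_eq_Ico, Finset.sum_mul]
      refine Finset.sum_congr rfl fun i hi => ?_
      have hi' := Finset.mem_range.mp hi
      rw [hdiv j' i hj' (by omega), if_pos hi']
    · rw [Finset.sum_mul]
      refine Finset.sum_congr rfl fun i hi => ?_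
      have hi' := Finset.mem_Ico.mp hi
      rw [hdiv j' i hj' hi'.2, if_neg (by omega)]
  -- phieq
  have e3 : A * φ t = γ (p - (j+1)) * φ s + ∑ i ∈ Finset.Ico (p - j) p, γ i := by
    have h := hφeq j hjp t (by rw [div_le_iff₀ (by positivity)]; linarith)
      (by rw [le_div_iff₀ (by positivity)]; linarith)
    rw [← hsdef, Nat.sub_sub] at h
    field_simp at h
    linarith [h]
  -- sum relations
  have hR1 : (∑ i ∈ Finset.range (p - j), γ i)
      = (∑ i ∈ Finset.range (p - (j+1)), γ i) + γ (p - (j+1)) := by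
    rw [show p - j = (p - (j+1)) + 1 by omega, Finset.sum_range_succ]
  have hR2 : (∑ i ∈ Finset.range (p - j), γ i) + (∑ i ∈ Finset.Ico (p - j) p, γ i) = A := by
    rw [hA]
    simp only [Finset.range_eq_Ico]
    exact Finset.sum_Ico_consecutive _ (Nat.zero_le _) (Nat.sub_le p j)
  have hR3 : (∑ i ∈ Finset.range (p - (j+1)), γ i) + (∑ i ∈ Finset.Ico (p - (j+1)) p, γ i) = A := by
    rw [hA]
    simp only [Finset.range_eq_Ico]
    exact Finset.sum_Ico_consecutive _ (Nat.zero_le _) (Nat.sub_le p (j+1))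
  have e4 := hrec (j+1) (by omega)
  rw [show p * m + (j+1) = p * m + j + 1 by omega] at e4
  rw [e2, e1, hrec j hjp.le, e4]
  linear_combination (f m - f (m+1)) * e3 + f m * hR2 + (φ s * (f (m+1) - f m)) * hR1
    + (φ s * f (m+1)) * (hR3 - hR2)

set_option maxHeartbeats 1000000 in
theorem sup_inf_eq_max_min_P (p : ℕ) (hp : 2 ≤ p) (γ : ℕ → ℝ) (hγ : ∀ j < p, 0 < γ j)
    (A : ℝ) (hA : A = ∑ j ∈ Finset.range p, γ j)
    (φ : ℝ → ℝ)
    (hφc : ContinuousOn φ (Set.Icc 0 1)) (hφm : StrictMonoOn φ (Set.Icc 0 1))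
    (hφ0 : φ 0 = 0) (hφ1 : φ 1 = 1)
    (hφeq : ∀ j < p, ∀ t : ℝ, (j : ℝ) / p ≤ t → t ≤ ((j : ℝ) + 1) / p →
      φ t = γ (p - j - 1) / A * φ (p * t - j) + (∑ i ∈ Finset.Ico (p - j) p, γ i) / A)
    (f : ℕ → ℝ)
    (hf : ∀ n : ℕ, p ≤ n → f n = ∑ j ∈ Finset.range p, γ j * f ((n + j) / p))
    (fext : ℝ → ℝ)
    (hfext : ∀ n : ℕ, 1 ≤ n → ∀ t ∈ Set.Icc (0 : ℝ) 1,
      fext ((n : ℝ) + t) = (1 - φ t) * f n + φ t * f (n + 1))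
    (ρ : ℝ) (hρ : ρ = Real.log A / Real.log p)
    (P : ℝ → ℝ) (hP : ∀ t : ℝ, P t = A ^ (-(Int.fract t)) * fext ((p : ℝ) ^ Int.fract t))
    : ∃ t₁ ∈ Set.Icc (0 : ℝ) 1, ∃ t₂ ∈ Set.Icc (0 : ℝ) 1,
      (∀ t ∈ Set.Icc (0 : ℝ) 1, P t ≤ P t₁) ∧
      (∀ t ∈ Set.Icc (0 : ℝ) 1, P t₂ ≤ P t) ∧
      sSup {y : ℝ | ∃ n : ℕ, 1 ≤ n ∧ y = f n / (n : ℝ) ^ ρ}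
        = Filter.limsup (fun n : ℕ => f n / (n : ℝ) ^ ρ) Filter.atTop ∧
      Filter.limsup (fun n : ℕ => f n / (n : ℝ) ^ ρ) Filter.atTop = P t₁ ∧
      sInf {y : ℝ | ∃ n : ℕ, 1 ≤ n ∧ y = f n / (n : ℝ) ^ ρ}
        = Filter.liminf (fun n : ℕ => f n / (n : ℝ) ^ ρ) Filter.atTop ∧
      Filter.liminf (fun n : ℕ => f n / (n : ℝ) ^ ρ) Filter.atTop = P t₂ := by
  have hp0 : 0 < p := by omega
  have hpR : (1:ℝ) < p := by exact_mod_cast hp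
  have hpPos : (0:ℝ) < p := by positivity
  have hpne1 : (p:ℝ) ≠ 1 := ne_of_gt hpR
  have hlogp : (0:ℝ) < Real.log p := Real.log_pos hpR
  have hA0 : 0 < A := by
    rw [hA]
    exact Finset.sum_pos (fun j hj => hγ j (Finset.mem_range.mp hj))
      ⟨0, Finset.mem_range.mpr (by omega)⟩
  have keyA := selfSimilar_aux p hp γ hγ A hA φ hφ0 hφeq f hf fext hfext
  have keyAk : ∀ k : ℕ, ∀ x : ℝ, 1 ≤ x → fext ((p:ℝ)^k * x) = A^k * fext x := by
    intro k
    induction k with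
    | zero => intro x hx; simp
    | succ k ih =>
      intro x hx
      have hpx : (1:ℝ) ≤ (p:ℝ) * x := by nlinarith
      rw [show ((p:ℝ)^(k+1) * x) = (p:ℝ)^k * ((p:ℝ) * x) by ring, ih ((p:ℝ)*x) hpx,
        keyA x hx, pow_succ]
      ring
  have hfn : ∀ n : ℕ, 1 ≤ n → fext n = f n := by
    intro n hn
    have h := hfext n hn 0 ⟨le_refl 0, zero_le_one⟩
    rw [add_zero, hφ0] at h
    simpa using h
  -- continuity of fext on [n, n+1]
  have hcontP : ∀ n : ℕ, 1 ≤ n → ContinuousOn fext (Set.Icc (n:ℝ) ((n:ℝ)+1)) := by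
    intro n hn
    have hsub : ContinuousOn (fun x : ℝ => x - n) (Set.Icc (n:ℝ) ((n:ℝ)+1)) :=
      (continuous_id.sub continuous_const).continuousOn
    have hmap : Set.MapsTo (fun x : ℝ => x - n) (Set.Icc (n:ℝ) ((n:ℝ)+1)) (Set.Icc 0 1) := by
      intro x hx
      simp only [Set.mem_Icc] at hx ⊢
      constructor <;> linarith [hx.1, hx.2]
    have hφ' : ContinuousOn (fun x : ℝ => φ (x - n)) (Set.Icc (n:ℝ) ((n:ℝ)+1)) :=
      hφc.comp hsub hmap
    have hg : ContinuousOn (fun x : ℝ => (1 - φ (x - n)) * f n + φ (x - n) * f (n+1))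
        (Set.Icc (n:ℝ) ((n:ℝ)+1)) :=
      ((continuousOn_const.sub hφ').mul continuousOn_const).add (hφ'.mul continuousOn_const)
    refine hg.congr fun x hx => ?_
    have h := hfext n hn (x - n) (hmap hx)
    rw [show (n:ℝ) + (x - n) = x by ring] at h
    exact h
  have hcontI : ∀ N : ℕ, 1 ≤ N → ContinuousOn fext (Set.Icc (1:ℝ) N) := by
    intro N hN
    induction N with
    | zero => omega
    | succ N ih =>
      rcases Nat.lt_or_ge N 1 with h | h
      · have hN0 : N = 0 := by omega
        subst hN0
        refine (hcontP 1 le_rfl).mono ?_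
        intro x hx
        push_cast at hx ⊢
        exact ⟨hx.1, by linarith [hx.2]⟩
      · have h1 : ContinuousOn fext (Set.Icc (1:ℝ) N) := ih h
        have hNR : (1:ℝ) ≤ N := by exact_mod_cast h
        have h2 := hcontP N h
        have h3 := icc_paste_aux hNR (by linarith : (N:ℝ) ≤ (N:ℝ)+1) h1 h2
        have hcast : ((N+1 : ℕ) : ℝ) = (N:ℝ) + 1 := by push_cast; ring
        rwa [hcast]
  -- the periodic profile function
  set Q : ℝ → ℝ := fun u => A ^ (-u) * fext ((p:ℝ) ^ u) with hQdef
  have hQc : ContinuousOn Q (Set.Icc 0 1) := by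
    have h1 : Continuous fun u : ℝ => A ^ (-u) := by
      have he : (fun u : ℝ => A ^ (-u)) = fun u => Real.exp (Real.log A * (-u)) := by
        funext u; rw [Real.rpow_def_of_pos hA0]
      rw [he]
      exact Real.continuous_exp.comp (continuous_const.mul continuous_neg)
    have hpcont : Continuous fun u : ℝ => (p:ℝ) ^ u := by
      have he : (fun u : ℝ => (p:ℝ) ^ u) = fun u => Real.exp (Real.log p * u) := by
        funext u; rw [Real.rpow_def_of_pos hpPos]
      rw [he]
      exact Real.continuous_exp.comp (continuous_const.mul continuous_id)
    have hmap : Set.MapsTo (fun u : ℝ => (p:ℝ) ^ u) (Set.Icc 0 1) (Set.Icc (1:ℝ) p) := by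
      intro u hu
      constructor
      · calc (1:ℝ) = (p:ℝ) ^ (0:ℝ) := (Real.rpow_zero _).symm
          _ ≤ _ := Real.rpow_le_rpow_of_exponent_le hpR.le hu.1
      · calc (p:ℝ)^u ≤ (p:ℝ)^(1:ℝ) := Real.rpow_le_rpow_of_exponent_le hpR.le hu.2
          _ = p := Real.rpow_one _
    have h2 : ContinuousOn (fun u : ℝ => fext ((p:ℝ) ^ u)) (Set.Icc 0 1) :=
      (hcontI p (by omega)).comp hpcont.continuousOn hmap
    rw [hQdef]
    exact h1.continuousOn.mul h2
  -- Q 1 = Q 0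
  have hQ10 : Q 1 = Q 0 := by
    have h1 : fext ((p:ℝ) * 1) = A * fext 1 := keyA 1 le_rfl
    rw [mul_one] at h1
    have h2 : A ^ (-1 : ℝ) = A⁻¹ := by
      rw [show (-1 : ℝ) = -(1:ℝ) by norm_num, Real.rpow_neg hA0.le, Real.rpow_one]
    simp only [hQdef]
    rw [Real.rpow_one, h1, h2, neg_zero, Real.rpow_zero, one_mul]
    field_simp
    rw [Real.rpow_zero]
  -- P = Q on [0,1]
  have hPQ : ∀ t ∈ Set.Icc (0:ℝ) 1, P t = Q t := by
    intro t ht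
    rcases eq_or_lt_of_le ht.2 with h | h
    · subst h
      rw [hP 1, Int.fract_one, hQ10]
    · rw [hP t, Int.fract_eq_self.mpr ⟨ht.1, h⟩]
  -- value formula
  have hval : ∀ n : ℕ, 1 ≤ n → f n / (n:ℝ) ^ ρ = Q (Int.fract (Real.logb p n)) := by
    intro n hn
    have hn1 : (1:ℝ) ≤ n := by exact_mod_cast hn
    have hnpos : (0:ℝ) < n := by linarith
    set L : ℝ := Real.logb p n with hLdef
    have hL0 : 0 ≤ L := Real.logb_nonneg hpR hn1
    have hfl0 : 0 ≤ ⌊L⌋ := Int.floor_nonneg.mpr hL0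
    set k : ℕ := ⌊L⌋.toNat with hkdef
    have hkL : (k:ℝ) = ((⌊L⌋ : ℤ) : ℝ) := by
      rw [hkdef]
      exact_mod_cast congrArg (fun z : ℤ => (z : ℝ)) (Int.toNat_of_nonneg hfl0)
    set u : ℝ := Int.fract L with hudef
    have hu0 : 0 ≤ u := Int.fract_nonneg L
    have hu1 : u < 1 := Int.fract_lt_one L
    have hLku : L = (k:ℝ) + u := by
      rw [hkL, hudef]
      exact (Int.floor_add_fract L).symm
    have hpu1 : 1 ≤ (p:ℝ) ^ u := by
      calc (1:ℝ) = (p:ℝ)^(0:ℝ) := (Real.rpow_zero _).symm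
        _ ≤ _ := Real.rpow_le_rpow_of_exponent_le hpR.le hu0
    have hnL : (n:ℝ) = (p:ℝ) ^ L := (Real.rpow_logb hpPos hpne1 hnpos).symm
    have hfextn : fext n = A^k * fext ((p:ℝ)^u) := by
      conv_lhs => rw [hnL, hLku, Real.rpow_add hpPos, Real.rpow_natCast]
      exact keyAk k _ hpu1
    have hApow : (n:ℝ) ^ ρ = A^k * A ^ u := by
      have hx : (n:ℝ) ^ ρ = A ^ L := by
        rw [Real.rpow_def_of_pos hnpos, Real.rpow_def_of_pos hA0]
        congr 1
        rw [hρ, hLdef, Real.logb]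
        field_simp
      rw [hx, hLku, Real.rpow_add hA0, Real.rpow_natCast]
    have hAk : (0:ℝ) < A^k := pow_pos hA0 k
    have hAu : (0:ℝ) < A^u := Real.rpow_pos_of_pos hA0 u
    rw [← hfn n hn, hfextn, hApow]
    simp only [hQdef]
    rw [Real.rpow_neg hA0.le]
    field_simp
  -- max and min of Q
  obtain ⟨t₁, ht₁, hmax⟩ := isCompact_Icc.exists_isMaxOn (Set.nonempty_Icc.mpr zero_le_one) hQc
  obtain ⟨t₂, ht₂, hmin⟩ := isCompact_Icc.exists_isMinOn (Set.nonempty_Icc.mpr zero_le_one) hQc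
  have hmax' : ∀ v ∈ Set.Icc (0:ℝ) 1, Q v ≤ Q t₁ := fun v hv => hmax hv
  have hmin' : ∀ v ∈ Set.Icc (0:ℝ) 1, Q t₂ ≤ Q v := fun v hv => hmin hv
  -- representatives in Ico
  obtain ⟨t₁', ht₁', hQt₁⟩ : ∃ t' ∈ Set.Ico (0:ℝ) 1, Q t' = Q t₁ := by
    rcases eq_or_lt_of_le ht₁.2 with h | h
    · exact ⟨0, ⟨le_rfl, one_pos⟩, by rw [← h] at hQ10; exact hQ10.symm⟩
    · exact ⟨t₁, ⟨ht₁.1, h⟩, rfl⟩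
  obtain ⟨t₂', ht₂', hQt₂⟩ : ∃ t' ∈ Set.Ico (0:ℝ) 1, Q t' = Q t₂ := by
    rcases eq_or_lt_of_le ht₂.2 with h | h
    · exact ⟨0, ⟨le_rfl, one_pos⟩, by rw [← h] at hQ10; exact hQ10.symm⟩
    · exact ⟨t₂, ⟨ht₂.1, h⟩, rfl⟩
  -- approximation: values of the sequence come close to any Q t, t ∈ [0,1)
  have happrox : ∀ t ∈ Set.Ico (0:ℝ) 1, ∀ ε > 0,
      ∃ᶠ n : ℕ in atTop, 1 ≤ n ∧ |f n / (n:ℝ)^ρ - Q t| < ε := by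
    intro t ht ε hε
    have hkt0 : ∀ k : ℕ, (0:ℝ) ≤ (k:ℝ) + t := fun k => by
      have h0 : (0:ℝ) ≤ (k:ℝ) := Nat.cast_nonneg k
      linarith [ht.1]
    have hpk : ∀ k : ℕ, (1:ℝ) ≤ (p:ℝ) ^ ((k:ℝ) + t) := fun k => by
      calc (1:ℝ) = (p:ℝ)^(0:ℝ) := (Real.rpow_zero _).symm
        _ ≤ _ := Real.rpow_le_rpow_of_exponent_le hpR.le (hkt0 k)
    set nn : ℕ → ℕ := fun k : ℕ => ⌈(p:ℝ) ^ ((k:ℝ) + t)⌉₊ with hnndef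
    have hn1 : ∀ k, 1 ≤ nn k := by
      intro k
      simp only [hnndef]
      exact Nat.one_le_ceil_iff.mpr (by linarith [hpk k])
    have hlb : ∀ k : ℕ, (p:ℝ) ^ ((k:ℝ) + t) ≤ nn k := by
      intro k
      simp only [hnndef]
      exact Nat.le_ceil _
    have hub : ∀ k : ℕ, (nn k : ℝ) ≤ (p:ℝ) ^ ((k:ℝ) + t) * (1 + (p:ℝ)^(-(k:ℝ))) := by
      intro k
      have h1 : (nn k : ℝ) < (p:ℝ) ^ ((k:ℝ) + t) + 1 := by
        simp only [hnndef]
        exact Nat.ceil_lt_add_one (by positivity)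
      have h2 : (1:ℝ) ≤ (p:ℝ) ^ ((k:ℝ) + t) * (p:ℝ)^(-(k:ℝ)) := by
        rw [← Real.rpow_add hpPos]
        calc (1:ℝ) = (p:ℝ)^(0:ℝ) := (Real.rpow_zero _).symm
          _ ≤ _ := Real.rpow_le_rpow_of_exponent_le hpR.le (by linarith [ht.1])
      nlinarith [h1, h2]
    set L : ℕ → ℝ := fun k : ℕ => Real.logb p (nn k) with hLdef
    have hLlb : ∀ k : ℕ, (k:ℝ) + t ≤ L k := by
      intro k
      have h0 : (0:ℝ) < nn k := by exact_mod_cast hn1 k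
      have := (Real.logb_le_logb hpR (by positivity) h0).mpr (hlb k)
      rw [Real.logb_rpow hpPos hpne1] at this
      exact this
    set c : ℕ → ℝ := fun k : ℕ => Real.logb p (1 + (p:ℝ)^(-(k:ℝ))) with hcdef
    have hppos : ∀ k : ℕ, (0:ℝ) < (p:ℝ)^(-(k:ℝ)) := fun k => Real.rpow_pos_of_pos hpPos _
    have hc0 : ∀ k, 0 ≤ c k := fun k => Real.logb_nonneg hpR (by linarith [hppos k])
    have hLub : ∀ k : ℕ, L k ≤ (k:ℝ) + t + c k := by
      intro k
      have h0 : (0:ℝ) < nn k := by exact_mod_cast hn1 k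
      have h3 : (0:ℝ) < (p:ℝ) ^ ((k:ℝ) + t) * (1 + (p:ℝ)^(-(k:ℝ))) := by positivity
      have := (Real.logb_le_logb hpR h0 h3).mpr (hub k)
      rwa [Real.logb_mul (by positivity) (by positivity), Real.logb_rpow hpPos hpne1] at this
    have hctend : Tendsto c atTop (nhds 0) := by
      have h1 : Tendsto (fun k : ℕ => (p:ℝ)^(-(k:ℝ))) atTop (nhds 0) := by
        have he : (fun k : ℕ => (p:ℝ)^(-(k:ℝ))) = fun k : ℕ => ((p:ℝ)^(k:ℕ))⁻¹ := by
          funext k; rw [Real.rpow_neg hpPos.le, Real.rpow_natCast]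
        rw [he]
        exact (tendsto_pow_atTop_atTop_of_one_lt hpR).inv_tendsto_atTop
      have h2 : Tendsto (fun k : ℕ => 1 + (p:ℝ)^(-(k:ℝ))) atTop (nhds 1) := by
        have := h1.const_add (1:ℝ)
        simpa using this
      have h3 : Tendsto (fun y : ℝ => Real.logb p y) (nhds 1) (nhds 0) := by
        have hcont : ContinuousAt (fun y : ℝ => Real.logb p y) 1 := by
          simp only [Real.logb]
          exact (Real.continuousAt_log one_ne_zero).div_const _
        have := hcont.tendsto
        rwa [show Real.logb p 1 = 0 by simp] at this
      exact h3.comp h2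
    have hev : ∀ᶠ k : ℕ in atTop, c k < 1 - t := hctend.eventually_lt_const (by linarith [ht.2])
    have hfr : ∀ᶠ k : ℕ in atTop,
        Int.fract (L k) = L k - k ∧ (k:ℝ) + t ≤ L k ∧ L k ≤ (k:ℝ) + t + c k := by
      filter_upwards [hev] with k hk
      have h1 := hLlb k
      have h2 := hLub k
      have hfl : ⌊L k⌋ = (k:ℤ) := by
        rw [Int.floor_eq_iff]
        constructor
        · push_cast; linarith [ht.1]
        · push_cast; linarith
      refine ⟨?_, h1, h2⟩
      rw [Int.fract, hfl]
      push_cast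
      ring
    have hst : Tendsto (fun k => Int.fract (L k)) atTop (nhds t) := by
      refine tendsto_of_tendsto_of_tendsto_of_le_of_le' (tendsto_const_nhds)
        (by simpa using hctend.const_add t) ?_ ?_
      · filter_upwards [hfr] with k hk
        rw [hk.1]; linarith [hk.2.1]
      · filter_upwards [hfr] with k hk
        rw [hk.1]; linarith [hk.2.2]
    have hQt : Tendsto (fun k => Q (Int.fract (L k))) atTop (nhds (Q t)) := by
      have hcw : ContinuousWithinAt Q (Set.Icc 0 1) t := hQc t (Set.Ico_subset_Icc_self ht)
      apply hcw.tendsto.comp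
      rw [tendsto_nhdsWithin_iff]
      exact ⟨hst, Eventually.of_forall fun k => ⟨Int.fract_nonneg _, (Int.fract_lt_one _).le⟩⟩
    have htendn : Tendsto nn atTop atTop := by
      rw [← tendsto_natCast_atTop_iff (R := ℝ)]
      have h1 : Tendsto (fun k : ℕ => (p:ℝ) ^ ((k:ℝ) + t)) atTop atTop := by
        have he : (fun k : ℕ => (p:ℝ) ^ ((k:ℝ) + t)) = fun k : ℕ => (p:ℝ)^t * (p:ℝ)^(k:ℕ) := by
          funext k
          rw [← Real.rpow_natCast (p:ℝ) k, ← Real.rpow_add hpPos, add_comm]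
        rw [he]
        exact (tendsto_pow_atTop_atTop_of_one_lt hpR).const_mul_atTop
          (Real.rpow_pos_of_pos hpPos t)
      exact tendsto_atTop_mono hlb h1
    have hevk : ∀ᶠ k : ℕ in atTop, 1 ≤ nn k ∧ |f (nn k) / (nn k:ℝ)^ρ - Q t| < ε := by
      have hball : ∀ᶠ y in nhds (Q t), |y - Q t| < ε := by
        filter_upwards [Metric.ball_mem_nhds (Q t) hε] with y hy
        rwa [Metric.mem_ball, Real.dist_eq] at hy
      filter_upwards [hQt.eventually hball] with k hk
      refine ⟨hn1 k, ?_⟩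
      rw [hval (nn k) (hn1 k)]
      exact hk
    exact htendn.frequently hevk.frequently
  -- bounds
  have habove : ∀ n : ℕ, 1 ≤ n → f n / (n:ℝ)^ρ ≤ Q t₁ := by
    intro n hn
    rw [hval n hn]
    exact hmax' _ ⟨Int.fract_nonneg _, (Int.fract_lt_one _).le⟩
  have hbelow : ∀ n : ℕ, 1 ≤ n → Q t₂ ≤ f n / (n:ℝ)^ρ := by
    intro n hn
    rw [hval n hn]
    exact hmin' _ ⟨Int.fract_nonneg _, (Int.fract_lt_one _).le⟩
  have hevub : ∀ᶠ n : ℕ in atTop, f n / (n:ℝ)^ρ ≤ Q t₁ :=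
    eventually_atTop.mpr ⟨1, habove⟩
  have hevlb : ∀ᶠ n : ℕ in atTop, Q t₂ ≤ f n / (n:ℝ)^ρ :=
    eventually_atTop.mpr ⟨1, hbelow⟩
  have hBu : IsBoundedUnder (· ≤ ·) atTop (fun n : ℕ => f n / (n:ℝ)^ρ) :=
    isBoundedUnder_of_eventually_le hevub
  have hBl : IsBoundedUnder (· ≥ ·) atTop (fun n : ℕ => f n / (n:ℝ)^ρ) :=
    isBoundedUnder_of_eventually_ge hevlb
  have hlimsup : Filter.limsup (fun n : ℕ => f n / (n:ℝ)^ρ) atTop = Q t₁ := by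
    apply le_antisymm
    · exact Filter.limsup_le_of_le hBl.isCoboundedUnder_le hevub
    · apply le_of_forall_pos_le_add
      intro ε hε
      have hfreq' : ∃ᶠ n : ℕ in atTop, Q t₁ - ε ≤ f n / (n:ℝ)^ρ := by
        apply (happrox t₁' ht₁' ε hε).mono
        rintro n ⟨hn1, habs⟩
        rw [hQt₁] at habs
        have := abs_lt.mp habs
        linarith [this.1]
      have := Filter.le_limsup_of_frequently_le hfreq' hBu
      linarith
  have hliminf : Filter.liminf (fun n : ℕ => f n / (n:ℝ)^ρ) atTop = Q t₂ := by
    apply le_antisymm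
    · have : ∀ ε > (0:ℝ), Filter.liminf (fun n : ℕ => f n / (n:ℝ)^ρ) atTop ≤ Q t₂ + ε := by
        intro ε hε
        have hfreq' : ∃ᶠ n : ℕ in atTop, f n / (n:ℝ)^ρ ≤ Q t₂ + ε := by
          apply (happrox t₂' ht₂' ε hε).mono
          rintro n ⟨hn1, habs⟩
          rw [hQt₂] at habs
          have := abs_lt.mp habs
          linarith [this.2]
        exact Filter.liminf_le_of_frequently_le hfreq' hBl
      exact le_of_forall_pos_le_add this
    · exact Filter.le_liminf_of_le hBu.isCoboundedUnder_ge hevlb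
  -- sup and inf over the set
  have hSne : {y : ℝ | ∃ n : ℕ, 1 ≤ n ∧ y = f n / (n : ℝ) ^ ρ}.Nonempty :=
    ⟨f 1 / ((1:ℕ) : ℝ)^ρ, 1, le_rfl, rfl⟩
  have hSub : ∀ y ∈ {y : ℝ | ∃ n : ℕ, 1 ≤ n ∧ y = f n / (n : ℝ) ^ ρ}, y ≤ Q t₁ := by
    rintro y ⟨n, hn, rfl⟩
    exact habove n hn
  have hSlb : ∀ y ∈ {y : ℝ | ∃ n : ℕ, 1 ≤ n ∧ y = f n / (n : ℝ) ^ ρ}, Q t₂ ≤ y := by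
    rintro y ⟨n, hn, rfl⟩
    exact hbelow n hn
  have hsup : sSup {y : ℝ | ∃ n : ℕ, 1 ≤ n ∧ y = f n / (n : ℝ) ^ ρ} = Q t₁ := by
    apply le_antisymm (csSup_le hSne hSub)
    apply le_of_forall_pos_le_add
    intro ε hε
    obtain ⟨n, hn1, habs⟩ := (happrox t₁' ht₁' ε hε).exists
    have hmem : f n / (n:ℝ)^ρ ∈ {y : ℝ | ∃ n : ℕ, 1 ≤ n ∧ y = f n / (n : ℝ) ^ ρ} :=
      ⟨n, hn1, rfl⟩
    have h1 : f n / (n:ℝ)^ρ ≤ sSup {y : ℝ | ∃ n : ℕ, 1 ≤ n ∧ y = f n / (n : ℝ) ^ ρ} :=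
      le_csSup ⟨Q t₁, hSub⟩ hmem
    rw [hQt₁] at habs
    have := abs_lt.mp habs
    linarith [this.1]
  have hinf : sInf {y : ℝ | ∃ n : ℕ, 1 ≤ n ∧ y = f n / (n : ℝ) ^ ρ} = Q t₂ := by
    apply le_antisymm _ (le_csInf hSne hSlb)
    have hkey : ∀ ε > (0:ℝ), sInf {y : ℝ | ∃ n : ℕ, 1 ≤ n ∧ y = f n / (n : ℝ) ^ ρ} ≤ Q t₂ + ε := by
      intro ε hε
      obtain ⟨n, hn1, habs⟩ := (happrox t₂' ht₂' ε hε).exists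
      have hmem : f n / (n:ℝ)^ρ ∈ {y : ℝ | ∃ n : ℕ, 1 ≤ n ∧ y = f n / (n : ℝ) ^ ρ} :=
        ⟨n, hn1, rfl⟩
      have h1 : sInf {y : ℝ | ∃ n : ℕ, 1 ≤ n ∧ y = f n / (n : ℝ) ^ ρ} ≤ f n / (n:ℝ)^ρ :=
        csInf_le ⟨Q t₂, hSlb⟩ hmem
      rw [hQt₂] at habs
      have := abs_lt.mp habs
      linarith [this.2]
    exact le_of_forall_pos_le_add hkey
  refine ⟨t₁, ht₁, t₂, ht₂, ?_, ?_, ?_, ?_, ?_, ?_⟩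
  · intro t ht
    rw [hPQ t ht, hPQ t₁ ht₁]
    exact hmax' t ht
  · intro t ht
    rw [hPQ t ht, hPQ t₂ ht₂]
    exact hmin' t ht
  · rw [hsup, hlimsup]
  · rw [hlimsup, hPQ t₁ ht₁]
  · rw [hinf, hliminf]
  · rw [hliminf, hPQ t₂ ht₂]
end
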